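/- arXiv:1801.00328 — 2 statements merged into one kernel-verified Lean document; each statement's English description precedes it below -/
import Mathlib

section
/- Let P_1, ..., P_k be vertex-disjoint boundary paths (possibly single vertices) appearing in this cyclic order and covering all vertices of a convex point set P. Then there are at most k ways to add k-1 diagonals to P_1 ∪ ... ∪ P_k so as to obtain a non-crossing spanning path whose set of hull edges is exactly the edges of P_1 ∪ ... ∪ P_k. -/
namespace PG

/-- The `k`-th vertex (mod `n`) of the convex polygon. -/
def pt (n : ℕ) (hn : 0 < n) (k : ℕ) : Fin n := ⟨k % n, Nat.mod_lt _ hn⟩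

/-- `e` is a boundary (convex hull) edge of the convex `n`-gon. -/
def IsHullEdge {n : ℕ} (e : Sym2 (Fin n)) : Prop :=
  ∃ a b : Fin n, e = s(a, b) ∧ ((a.val + 1) % n = b.val ∨ (b.val + 1) % n = a.val)

instance {n : ℕ} : DecidablePred (IsHullEdge (n := n)) := fun _ => by
  unfold IsHullEdge; infer_instance

/-- Two chords of the convex `n`-gon cross (intersect in interior points):
their endpoint pairs are all distinct and separate each other in the cyclic order. -/
def Crosses {n : ℕ} (e f : Sym2 (Fin n)) : Prop :=
  ∃ a b c d : Fin n, e = s(a, b) ∧ f = s(c, d) ∧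
    a ≠ b ∧ c ≠ d ∧ a ≠ c ∧ a ≠ d ∧ b ≠ c ∧ b ≠ d ∧
    (((c.val + n - a.val) % n < (b.val + n - a.val) % n) ↔
      ¬((d.val + n - a.val) % n < (b.val + n - a.val) % n))

instance {n : ℕ} (e f : Sym2 (Fin n)) : Decidable (Crosses e f) := by
  unfold Crosses; infer_instance

/-- The edge set of the spanning path visiting the points in the order given
by the permutation `p`. -/
def pathEdges {n : ℕ} (p : Equiv.Perm (Fin n)) : Finset (Sym2 (Fin n)) :=
  Finset.univ.filter (fun e => ∃ i j : Fin n, e = s(p i, p j) ∧ j.val = i.val + 1)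

/-- `E` is the edge set of a non-crossing (plane) spanning path. -/
def IsNCPath {n : ℕ} (E : Finset (Sym2 (Fin n))) : Prop :=
  (∃ p : Equiv.Perm (Fin n), E = pathEdges p) ∧ ∀ e ∈ E, ∀ f ∈ E, ¬ Crosses e f

instance {n : ℕ} : DecidablePred (IsNCPath (n := n)) := fun _ => by
  unfold IsNCPath pathEdges; infer_instance

/-- Vertices of the path graph `G(P)`: non-crossing spanning paths. -/
def PVert (n : ℕ) := {E : Finset (Sym2 (Fin n)) // IsNCPath E}

instance {n : ℕ} : Fintype (PVert n) := Subtype.fintype _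
instance {n : ℕ} : DecidableEq (PVert n) := Subtype.instDecidableEq

/-- The path graph `G(P)`: two plane spanning paths are adjacent iff their
edge sets differ in exactly two edges. -/
def pathGraph (n : ℕ) : SimpleGraph (PVert n) where
  Adj u v := u ≠ v ∧ (u.1 \ v.1 ∪ v.1 \ u.1).card = 2
  symm := by constructor; rintro u v ⟨h1, h2⟩; exact ⟨h1.symm, by rwa [Finset.union_comm]⟩
  loopless := by constructor; rintro u ⟨h, _⟩; exact h rfl

instance {n : ℕ} : DecidableRel (pathGraph n).Adj := fun u v => by
  unfold pathGraph; infer_instance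

/-- `v` is a boundary path: all its edges are hull edges. -/
def IsBoundary {n : ℕ} (v : PVert n) : Prop := ∀ e ∈ v.1, IsHullEdge e

/-- Number of diagonals (the level) of a path. -/
def diagCount {n : ℕ} (v : PVert n) : ℕ :=
  (v.1.filter (fun e => ¬ IsHullEdge e)).card

/-- Degree of a point in an edge set. -/
def degIn {n : ℕ} (E : Finset (Sym2 (Fin n))) (x : Fin n) : ℕ :=
  (E.filter (fun e => x ∈ e)).card

section Aux
variable {n : ℕ}

lemma modlem (hn : 0 < n) {a b : ℕ} (ha : a < n) (hb : b < n) :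
    (a + n - b) % n = if b ≤ a then a - b else a + n - b := by
  split_ifs with h
  · have h2 : a + n - b = (a - b) + n := by omega
    rw [h2, Nat.add_mod_right, Nat.mod_eq_of_lt (by omega)]
  · exact Nat.mod_eq_of_lt (by omega)

/-- cyclic position of `x` measured from `v`. -/
def dd (v x : Fin n) : ℕ := (x.val + n - v.val) % n

lemma dd_eq (hn : 0 < n) (v x : Fin n) :
    dd v x = if v.val ≤ x.val then x.val - v.val else x.val + n - v.val :=
  modlem hn x.isLt v.isLt

lemma dd_lt (hn : 0 < n) (v x : Fin n) : dd v x < n := Nat.mod_lt _ hn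

lemma dd_self (hn : 0 < n) (v : Fin n) : dd v v = 0 := by
  rw [dd_eq hn]; simp

lemma dd_inj (hn : 0 < n) (v : Fin n) {x y : Fin n} (h : dd v x = dd v y) : x = y := by
  rw [dd_eq hn, dd_eq hn] at h
  have hx := x.isLt; have hy := y.isLt; have hv := v.isLt
  apply Fin.ext
  split_ifs at h <;> omega

def fsucc (hn : 0 < n) (z : Fin n) : Fin n := ⟨(z.val + 1) % n, Nat.mod_lt _ hn⟩
def fpred (hn : 0 < n) (z : Fin n) : Fin n := ⟨(z.val + n - 1) % n, Nat.mod_lt _ hn⟩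

lemma fsucc_val (hn : 0 < n) (z : Fin n) :
    (fsucc hn z).val = if z.val + 1 < n then z.val + 1 else 0 := by
  unfold fsucc
  split_ifs with h
  · exact Nat.mod_eq_of_lt h
  · have : z.val + 1 = n := by have := z.isLt; omega
    simp [this]

lemma fpred_val (hn : 0 < n) (z : Fin n) :
    (fpred hn z).val = if 0 < z.val then z.val - 1 else n - 1 := by
  unfold fpred
  split_ifs with h
  · have h2 : z.val + n - 1 = (z.val - 1) + n := by omega
    simp only [h2, Nat.add_mod_right]
    exact Nat.mod_eq_of_lt (by have := z.isLt; omega)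
  · have h2 : z.val = 0 := by omega
    simp only [h2, Nat.zero_add]
    exact Nat.mod_eq_of_lt (by omega)

lemma dd_fsucc (hn : 0 < n) (v z : Fin n) (h : dd v z + 1 < n) :
    dd v (fsucc hn z) = dd v z + 1 := by
  have h1 := dd_eq hn v z
  have h2 := dd_eq hn v (fsucc hn z)
  have h3 := fsucc_val hn z
  have hz := z.isLt; have hv := v.isLt
  rw [h1] at h ⊢; rw [h2, h3]
  split_ifs at * <;> omega

lemma dd_fpred (hn : 0 < n) (v z : Fin n) (h : 0 < dd v z) :
    dd v (fpred hn z) = dd v z - 1 := by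
  have h1 := dd_eq hn v z
  have h2 := dd_eq hn v (fpred hn z)
  have h3 := fpred_val hn z
  have hz := z.isLt; have hv := v.isLt
  rw [h1] at h ⊢; rw [h2, h3]
  split_ifs at * <;> omega

lemma fsucc_fpred (hn : 0 < n) (z : Fin n) : fsucc hn (fpred hn z) = z := by
  apply Fin.ext
  rw [fsucc_val hn, fpred_val hn]
  have hz := z.isLt
  split_ifs <;> omega

lemma hull_succ (hn : 0 < n) (z : Fin n) : IsHullEdge s(z, fsucc hn z) := by
  refine ⟨z, fsucc hn z, rfl, Or.inl ?_⟩
  unfold fsucc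
  rfl

end Aux
section Path
variable {n : ℕ}

lemma mem_pathEdges_iff (p : Equiv.Perm (Fin n)) (e : Sym2 (Fin n)) :
    e ∈ pathEdges p ↔ ∃ i j : Fin n, e = s(p i, p j) ∧ j.val = i.val + 1 := by
  simp [pathEdges]

def PP (hn : 0 < n) (p : Equiv.Perm (Fin n)) (j : ℕ) : Fin n :=
  p ⟨j % n, Nat.mod_lt _ hn⟩

lemma PP_eq (hn : 0 < n) (p : Equiv.Perm (Fin n)) {j : ℕ} (hj : j < n) :
    PP hn p j = p ⟨j, hj⟩ := by
  unfold PP; congr 1; exact Fin.ext (Nat.mod_eq_of_lt hj)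

lemma PP_inj (hn : 0 < n) (p : Equiv.Perm (Fin n)) {j j' : ℕ} (hj : j < n) (hj' : j' < n)
    (h : PP hn p j = PP hn p j') : j = j' := by
  rw [PP_eq hn p hj, PP_eq hn p hj'] at h
  simpa using congrArg Fin.val (p.injective h)

lemma mem_PP (hn : 0 < n) (p : Equiv.Perm (Fin n)) {t : ℕ} (ht : t + 1 < n) :
    s(PP hn p t, PP hn p (t + 1)) ∈ pathEdges p := by
  rw [mem_pathEdges_iff]
  exact ⟨⟨t, by omega⟩, ⟨t + 1, ht⟩, by rw [PP_eq hn p (by omega : t < n), PP_eq hn p ht], rfl⟩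

lemma edge_at (hn : 0 < n) (p : Equiv.Perm (Fin n)) {e : Sym2 (Fin n)}
    (he : e ∈ pathEdges p) {m : ℕ} (hm : m < n) (hme : PP hn p m ∈ e) :
    (m + 1 < n ∧ e = s(PP hn p m, PP hn p (m + 1))) ∨
    (0 < m ∧ e = s(PP hn p (m - 1), PP hn p m)) := by
  rw [mem_pathEdges_iff] at he
  obtain ⟨i, j, rfl, hij⟩ := he
  rw [Sym2.mem_iff] at hme
  rw [PP_eq hn p hm] at hme
  rcases hme with hme | hme
  · left
    have hi : (⟨m, hm⟩ : Fin n) = i := p.injective hme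
    have hmi : m = i.val := by rw [← hi]
    have hjn : j.val < n := j.isLt
    have hmn : m + 1 < n := by omega
    refine ⟨hmn, ?_⟩
    rw [PP_eq hn p hm, PP_eq hn p hmn]
    have hj2 : (⟨m + 1, hmn⟩ : Fin n) = j := Fin.ext (by simp only [Fin.val_mk]; omega)
    subst hi; subst hj2; rfl
  · right
    have hi : (⟨m, hm⟩ : Fin n) = j := p.injective hme
    have hmj : m = j.val := by rw [← hi]
    have hmn : m - 1 < n := by omega
    refine ⟨by omega, ?_⟩
    rw [PP_eq hn p hmn, PP_eq hn p hm]
    have hi2 : (⟨m - 1, hmn⟩ : Fin n) = i := Fin.ext (by simp only [Fin.val_mk]; omega)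
    subst hi; subst hi2; rfl


lemma dd_cases (hn0 : 0 < n) (v z : Fin n) :
    (v.val ≤ z.val ∧ dd v z = z.val - v.val) ∨
    (z.val < v.val ∧ dd v z = z.val + n - v.val) := by
  rw [dd_eq hn0]
  rcases le_or_gt v.val z.val with h | h
  · left; exact ⟨h, if_pos h⟩
  · right; exact ⟨h, if_neg (by omega)⟩

lemma dd_rel (hn0 : 0 < n) (v P z : Fin n) :
    dd P z = if dd v P ≤ dd v z then dd v z - dd v P else dd v z + n - dd v P := by
  have h1 := dd_eq hn0 v P
  have h2 := dd_eq hn0 v z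
  have h3 := dd_eq hn0 P z
  have b1 := v.isLt; have b2 := P.isLt; have b3 := z.isLt
  rw [h1, h2, h3]
  split_ifs <;> omega

lemma dd_surjp (hn : 0 < n) (v : Fin n) (p : Equiv.Perm (Fin n)) {m : ℕ} (hm : m < n) :
    ∃ j : Fin n, dd v (p j) = m := by
  have hinj : Function.Injective (fun j : Fin n => (⟨dd v (p j), dd_lt hn v _⟩ : Fin n)) := by
    intro a b h
    exact p.injective (dd_inj hn v (by simpa using congrArg Fin.val h))
  obtain ⟨j, hj⟩ := Finite.injective_iff_surjective.mp hinj ⟨m, hm⟩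
  exact ⟨j, congrArg Fin.val hj⟩

lemma flip_lemma (g : ℕ → Prop) {a b : ℕ} (hab : a ≤ b) (hga : g a) (hgb : ¬ g b) :
    ∃ t, a ≤ t ∧ t < b ∧ g t ∧ ¬ g (t + 1) := by
  by_contra hc
  push_neg at hc
  have key : ∀ t, a ≤ t → t ≤ b → g t := by
    intro t hat
    induction t, hat using Nat.le_induction with
    | base => intro _; exact hga
    | succ t hat ih =>
      intro htb
      by_contra hgt
      exact hgt (hc t hat (by omega) (ih (by omega)))
  exact hgb (key b hab le_rfl)

end Path
section Main
variable {n : ℕ}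

set_option maxHeartbeats 2000000 in
lemma interval_step (hn0 : 0 < n) (p : Equiv.Perm (Fin n))
    (hNC : ∀ e ∈ pathEdges p, ∀ f ∈ pathEdges p, ¬ Crosses e f)
    {i r : ℕ} (hi : i + 1 < n) (hri : r ≤ i)
    (hincl : ∀ j ≤ i, dd (PP hn0 p 0) (PP hn0 p j) ≤ r ∨
      n - (i - r) ≤ dd (PP hn0 p 0) (PP hn0 p j))
    (hsurj : ∀ m < n, (m ≤ r ∨ n - (i - r) ≤ m) → ∃ j ≤ i, dd (PP hn0 p 0) (PP hn0 p j) = m)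
    (hend : dd (PP hn0 p 0) (PP hn0 p i) = r ∨ dd (PP hn0 p 0) (PP hn0 p i) = n - (i - r)) :
    dd (PP hn0 p 0) (PP hn0 p (i + 1)) = r + 1 ∨
    dd (PP hn0 p 0) (PP hn0 p (i + 1)) = n - (i - r) - 1 := by
  set v := PP hn0 p 0 with hv
  set a := n - (i - r) with ha
  have hra : r + 2 ≤ a := by omega
  have han : a ≤ n := by omega
  have hfresh : ∀ t : ℕ, i + 1 ≤ t → t < n →
      r < dd v (PP hn0 p t) ∧ dd v (PP hn0 p t) < a := by
    intro t hti htn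
    by_contra hcon
    have h1 : dd v (PP hn0 p t) ≤ r ∨ a ≤ dd v (PP hn0 p t) := by
      have := dd_lt hn0 v (PP hn0 p t); omega
    obtain ⟨j, hj, hjv⟩ := hsurj _ (dd_lt hn0 v (PP hn0 p t)) h1
    have := PP_inj hn0 p (by omega) htn (dd_inj hn0 v hjv)
    omega
  have hx := hfresh (i + 1) le_rfl hi
  set x := dd v (PP hn0 p (i + 1)) with hxdef
  by_contra hcon
  push_neg at hcon
  have hx1 : r + 1 < x := by omega
  have hx2 : x < a - 1 := by omega
  obtain ⟨j1, hj1⟩ := dd_surjp hn0 v p (show x - 1 < n by omega)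
  obtain ⟨j2, hj2⟩ := dd_surjp hn0 v p (show x + 1 < n by omega)
  have hPj1 : PP hn0 p j1.val = p j1 := by rw [PP_eq hn0 p j1.isLt]
  have hPj2 : PP hn0 p j2.val = p j2 := by rw [PP_eq hn0 p j2.isLt]
  have hj1i : i + 2 ≤ j1.val := by
    rcases Nat.lt_or_ge j1.val (i + 1) with hcase | hcase
    · exfalso
      rcases hincl j1.val (by omega) with h | h <;> rw [hPj1, hj1] at h <;> omega
    · rcases Nat.eq_or_lt_of_le hcase with hcase2 | hcase2
      · exfalso
        have he : PP hn0 p j1.val = PP hn0 p (i + 1) := by rw [← hcase2]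
        rw [hPj1] at he
        rw [he, ← hxdef] at hj1
        omega
      · omega
  have hj2i : i + 2 ≤ j2.val := by
    rcases Nat.lt_or_ge j2.val (i + 1) with hcase | hcase
    · exfalso
      rcases hincl j2.val (by omega) with h | h <;> rw [hPj2, hj2] at h <;> omega
    · rcases Nat.eq_or_lt_of_le hcase with hcase2 | hcase2
      · exfalso
        have he : PP hn0 p j2.val = PP hn0 p (i + 1) := by rw [← hcase2]
        rw [hPj2] at he
        rw [he, ← hxdef] at hj2
        omega
      · omega
  -- the main crossing argument
  have hmain : ∀ t, i + 2 ≤ t → t + 1 < n →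
      ((dd v (PP hn0 p t) < x ∧ x < dd v (PP hn0 p (t + 1))) ∨
       (dd v (PP hn0 p (t + 1)) < x ∧ x < dd v (PP hn0 p t))) → False := by
    intro t ht htn hdiff
    have hf1 := hfresh t (by omega) (by omega)
    have hf2 := hfresh (t + 1) (by omega) htn
    have hef : s(PP hn0 p i, PP hn0 p (i + 1)) ∈ pathEdges p := mem_PP hn0 p hi
    have hff : s(PP hn0 p t, PP hn0 p (t + 1)) ∈ pathEdges p := mem_PP hn0 p htn
    apply hNC _ hef _ hff
    have hnev : ∀ y z : Fin n, dd v y ≠ dd v z → y ≠ z := fun y z h hyz => h (by rw [hyz])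
    refine ⟨PP hn0 p i, PP hn0 p (i + 1), PP hn0 p t, PP hn0 p (t + 1), rfl, rfl,
      hnev _ _ (by rcases hend with h | h <;> omega),
      hnev _ _ (by omega),
      hnev _ _ (by rcases hend with h | h <;> omega),
      hnev _ _ (by rcases hend with h | h <;> omega),
      hnev _ _ (by omega),
      hnev _ _ (by omega), ?_⟩
    show dd (PP hn0 p i) (PP hn0 p t) < dd (PP hn0 p i) (PP hn0 p (i + 1)) ↔
      ¬ (dd (PP hn0 p i) (PP hn0 p (t + 1)) < dd (PP hn0 p i) (PP hn0 p (i + 1)))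
    rw [dd_rel hn0 v (PP hn0 p i) (PP hn0 p t), dd_rel hn0 v (PP hn0 p i) (PP hn0 p (i + 1)),
        dd_rel hn0 v (PP hn0 p i) (PP hn0 p (t + 1))]
    have D1 := dd_lt hn0 v (PP hn0 p i)
    have D2 := dd_lt hn0 v (PP hn0 p (i + 1))
    have D3 := dd_lt hn0 v (PP hn0 p t)
    have D4 := dd_lt hn0 v (PP hn0 p (t + 1))
    split_ifs <;> omega
  -- apply the flip lemma to find a switching edge
  have hnx : ∀ t, i + 2 ≤ t → t < n → dd v (PP hn0 p t) ≠ x := by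
    intro t ht htn hcc
    have := PP_inj hn0 p htn hi (dd_inj hn0 v (hcc.trans hxdef))
    omega
  rcases Nat.lt_or_ge j1.val j2.val with ho | ho
  · obtain ⟨t, ht1, ht2, hgt, hgtn⟩ := flip_lemma (fun t => dd v (PP hn0 p t) < x)
      (Nat.le_of_lt ho) (by show dd v (PP hn0 p j1.val) < x; rw [hPj1, hj1]; omega)
      (by show ¬ (dd v (PP hn0 p j2.val) < x); rw [hPj2, hj2]; omega)
    have htn : t + 1 < n := by have := j2.isLt; omega
    refine hmain t (by omega) htn (Or.inl ⟨hgt, ?_⟩)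
    have := hnx (t + 1) (by omega) htn
    omega
  · obtain ⟨t, ht1, ht2, hgt, hgtn⟩ := flip_lemma (fun t => ¬ (dd v (PP hn0 p t) < x))
      ho (by show ¬ (dd v (PP hn0 p j2.val) < x); rw [hPj2, hj2]; omega)
      (by show ¬ ¬ (dd v (PP hn0 p j1.val) < x); rw [hPj1, hj1]; intro hh; exact hh (by omega))
    have htn : t + 1 < n := by have := j1.isLt; omega
    push_neg at hgtn
    refine hmain t (by omega) htn (Or.inr ⟨hgtn, ?_⟩)
    have := hnx t (by omega) (by omega)
    omega

lemma next_step (hn0 : 0 < n) (p : Equiv.Perm (Fin n)) (H : Finset (Sym2 (Fin n)))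
    (hNC : ∀ e ∈ pathEdges p, ∀ f ∈ pathEdges p, ¬ Crosses e f)
    (hF : (pathEdges p).filter (fun e => IsHullEdge e) = H)
    {i r : ℕ} (hi : i + 1 < n) (hri : r ≤ i)
    (hincl : ∀ j ≤ i, dd (PP hn0 p 0) (PP hn0 p j) ≤ r ∨
      n - (i - r) ≤ dd (PP hn0 p 0) (PP hn0 p j))
    (hsurj : ∀ m < n, (m ≤ r ∨ n - (i - r) ≤ m) → ∃ j ≤ i, dd (PP hn0 p 0) (PP hn0 p j) = m)
    (hend : dd (PP hn0 p 0) (PP hn0 p i) = r ∨ dd (PP hn0 p 0) (PP hn0 p i) = n - (i - r)) :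
    (dd (PP hn0 p 0) (PP hn0 p i) = r →
      ((s(PP hn0 p i, fsucc hn0 (PP hn0 p i)) ∈ H ∧
          dd (PP hn0 p 0) (PP hn0 p (i + 1)) = r + 1) ∨
       (s(PP hn0 p i, fsucc hn0 (PP hn0 p i)) ∉ H ∧
          dd (PP hn0 p 0) (PP hn0 p (i + 1)) = n - (i - r) - 1))) ∧
    (dd (PP hn0 p 0) (PP hn0 p i) = n - (i - r) →
      ((s(fpred hn0 (PP hn0 p i), PP hn0 p i) ∈ H ∧
          dd (PP hn0 p 0) (PP hn0 p (i + 1)) = n - (i - r) - 1) ∨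
       (s(fpred hn0 (PP hn0 p i), PP hn0 p i) ∉ H ∧
          dd (PP hn0 p 0) (PP hn0 p (i + 1)) = r + 1))) := by
  have hint := interval_step hn0 p hNC hi hri hincl hsurj hend
  set v := PP hn0 p 0 with hv
  set a := n - (i - r) with ha
  have hra : r + 2 ≤ a := by omega
  have han : a ≤ n := by omega
  have hHsub : H ⊆ pathEdges p := by
    rw [← hF]; exact Finset.filter_subset _ _
  constructor
  · -- right end
    intro hside
    by_cases hmem : s(PP hn0 p i, fsucc hn0 (PP hn0 p i)) ∈ H
    · left
      refine ⟨hmem, ?_⟩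
      have hin := hHsub hmem
      have hfs : dd v (fsucc hn0 (PP hn0 p i)) = r + 1 := by
        rw [dd_fsucc hn0 v _ (by rw [hside]; omega), hside]
      rcases edge_at hn0 p hin (by omega : i < n) (Sym2.mem_mk_left _ _) with ⟨h1, h2⟩ | ⟨h1, h2⟩
      · rcases Sym2.eq_iff.mp h2 with ⟨ha1, hb1⟩ | ⟨ha1, hb1⟩
        · rw [← hb1, hfs]
        · exfalso
          have := PP_inj hn0 p (by omega : i < n) hi ha1
          omega
      · exfalso
        rcases Sym2.eq_iff.mp h2 with ⟨ha1, hb1⟩ | ⟨ha1, hb1⟩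
        · have := PP_inj hn0 p (by omega : i < n) (by omega : i - 1 < n) ha1
          omega
        · -- hb1 : fsucc (PP i) = PP (i-1)
          have hdd : dd v (PP hn0 p (i - 1)) = r + 1 := by rw [← hb1, hfs]
          rcases hincl (i - 1) (by omega) with h | h <;> omega
    · right
      refine ⟨hmem, ?_⟩
      rcases hint with hcase | hcase
      · exfalso
        have hfs : dd v (fsucc hn0 (PP hn0 p i)) = r + 1 := by
          rw [dd_fsucc hn0 v _ (by rw [hside]; omega), hside]
        have heq : PP hn0 p (i + 1) = fsucc hn0 (PP hn0 p i) :=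
          dd_inj hn0 v (by rw [hcase, hfs])
        apply hmem
        rw [← hF, Finset.mem_filter]
        refine ⟨?_, hull_succ hn0 _⟩
        rw [← heq]
        exact mem_PP hn0 p hi
      · exact hcase
  · -- left end
    intro hside
    have hfp : dd v (fpred hn0 (PP hn0 p i)) = a - 1 := by
      rw [dd_fpred hn0 v _ (by rw [hside]; omega), hside]
    have hhull : IsHullEdge s(fpred hn0 (PP hn0 p i), PP hn0 p i) := by
      refine ⟨fpred hn0 (PP hn0 p i), PP hn0 p i, rfl, Or.inl ?_⟩
      exact congrArg Fin.val (fsucc_fpred hn0 (PP hn0 p i))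
    by_cases hmem : s(fpred hn0 (PP hn0 p i), PP hn0 p i) ∈ H
    · left
      refine ⟨hmem, ?_⟩
      have hin := hHsub hmem
      rcases edge_at hn0 p hin (by omega : i < n) (Sym2.mem_mk_right _ _) with ⟨h1, h2⟩ | ⟨h1, h2⟩
      · rcases Sym2.eq_iff.mp h2 with ⟨ha1, hb1⟩ | ⟨ha1, hb1⟩
        · exfalso
          have := PP_inj hn0 p (by omega : i < n) hi hb1
          omega
        · rw [← ha1, hfp]
      · exfalso
        rcases Sym2.eq_iff.mp h2 with ⟨ha1, hb1⟩ | ⟨ha1, hb1⟩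
        · have hdd : dd v (PP hn0 p (i - 1)) = a - 1 := by rw [← ha1, hfp]
          rcases hincl (i - 1) (by omega) with h | h <;> omega
        · have := PP_inj hn0 p (by omega : i - 1 < n) (by omega : i < n) hb1.symm
          omega
    · right
      refine ⟨hmem, ?_⟩
      rcases hint with hcase | hcase
      · exact hcase
      · exfalso
        have heq : PP hn0 p (i + 1) = fpred hn0 (PP hn0 p i) :=
          dd_inj hn0 v (by rw [hcase, hfp])
        apply hmem
        rw [← hF, Finset.mem_filter]
        refine ⟨?_, hhull⟩
        have : s(fpred hn0 (PP hn0 p i), PP hn0 p i) = s(PP hn0 p i, PP hn0 p (i + 1)) := by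
          rw [heq]; exact Sym2.eq_swap
        rw [this]
        exact mem_PP hn0 p hi
lemma claim (hn0 : 0 < n) (p : Equiv.Perm (Fin n))
    (hNC : ∀ e ∈ pathEdges p, ∀ f ∈ pathEdges p, ¬ Crosses e f) :
    ∀ i, i < n → ∃ r, r ≤ i ∧
      (∀ j ≤ i, dd (PP hn0 p 0) (PP hn0 p j) ≤ r ∨
        n - (i - r) ≤ dd (PP hn0 p 0) (PP hn0 p j)) ∧
      (∀ m < n, (m ≤ r ∨ n - (i - r) ≤ m) → ∃ j ≤ i, dd (PP hn0 p 0) (PP hn0 p j) = m) ∧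
      (dd (PP hn0 p 0) (PP hn0 p i) = r ∨ dd (PP hn0 p 0) (PP hn0 p i) = n - (i - r)) := by
  intro i
  induction i with
  | zero =>
    intro h0
    refine ⟨0, le_rfl, ?_, ?_, Or.inl (dd_self hn0 _)⟩
    · intro j hj
      have hj0 : j = 0 := by omega
      subst hj0
      exact Or.inl (le_of_eq (dd_self hn0 _))
    · intro m hm hmor
      have hm0 : m = 0 := by omega
      subst hm0
      exact ⟨0, le_rfl, dd_self hn0 _⟩
  | succ i IH =>
    intro hi1
    obtain ⟨r, hri, hincl, hsurj, hend⟩ := IH (by omega)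
    have hint := interval_step hn0 p hNC hi1 hri hincl hsurj hend
    rcases hint with hc | hc
    · refine ⟨r + 1, by omega, ?_, ?_, Or.inl hc⟩
      · intro j hj
        rcases Nat.lt_or_ge j (i + 1) with h | h
        · rcases hincl j (by omega) with h2 | h2
          · exact Or.inl (by omega)
          · exact Or.inr (by omega)
        · have hj2 : j = i + 1 := by omega
          subst hj2
          exact Or.inl (by omega)
      · intro m hm hmor
        rcases hmor with h | h
        · rcases Nat.lt_or_ge m (r + 1) with h2 | h2
          · obtain ⟨j, hj, hjv⟩ := hsurj m hm (Or.inl (by omega))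
            exact ⟨j, by omega, hjv⟩
          · exact ⟨i + 1, le_rfl, by omega⟩
        · obtain ⟨j, hj, hjv⟩ := hsurj m hm (Or.inr (by omega))
          exact ⟨j, by omega, hjv⟩
    · refine ⟨r, by omega, ?_, ?_, Or.inr (by omega)⟩
      · intro j hj
        rcases Nat.lt_or_ge j (i + 1) with h | h
        · rcases hincl j (by omega) with h2 | h2
          · exact Or.inl h2
          · exact Or.inr (by omega)
        · have hj2 : j = i + 1 := by omega
          subst hj2
          exact Or.inr (by omega)
      · intro m hm hmor
        rcases hmor with h | h
        · obtain ⟨j, hj, hjv⟩ := hsurj m hm (Or.inl h)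
          exact ⟨j, by omega, hjv⟩
        · rcases Nat.lt_or_ge m (n - (i - r)) with h2 | h2
          · exact ⟨i + 1, le_rfl, by omega⟩
          · obtain ⟨j, hj, hjv⟩ := hsurj m hm (Or.inr h2)
            exact ⟨j, by omega, hjv⟩

lemma uniq (hn0 : 0 < n) (p q : Equiv.Perm (Fin n)) (H : Finset (Sym2 (Fin n)))
    (hNCp : ∀ e ∈ pathEdges p, ∀ f ∈ pathEdges p, ¬ Crosses e f)
    (hFp : (pathEdges p).filter (fun e => IsHullEdge e) = H)
    (hNCq : ∀ e ∈ pathEdges q, ∀ f ∈ pathEdges q, ¬ Crosses e f)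
    (hFq : (pathEdges q).filter (fun e => IsHullEdge e) = H)
    (h0 : PP hn0 p 0 = PP hn0 q 0) :
    ∀ i, i < n → PP hn0 p i = PP hn0 q i := by
  have main : ∀ i, i < n → ∀ j, j ≤ i → PP hn0 p j = PP hn0 q j := by
    intro i
    induction i with
    | zero =>
      intro _ j hj
      have hj0 : j = 0 := by omega
      subst hj0
      exact h0
    | succ i IH =>
      intro hi1 j hj
      rcases Nat.lt_or_ge j (i + 1) with hc | hc
      · exact IH (by omega) j (by omega)
      have hj1 : j = i + 1 := by omega
      subst hj1
      have hIH : ∀ j, j ≤ i → PP hn0 p j = PP hn0 q j := IH (by omega)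
      obtain ⟨rp, hrp, hinclp, hsurjp, hendp⟩ := claim hn0 p hNCp i (by omega)
      obtain ⟨rq, hrq, hinclq, hsurjq, hendq⟩ := claim hn0 q hNCq i (by omega)
      have hv : PP hn0 q 0 = PP hn0 p 0 := h0.symm
      have hreq : rp = rq := by
        by_contra hne
        rcases Nat.lt_or_ge rp rq with ho | ho
        · obtain ⟨j2, hj2, hjv⟩ := hsurjq (rp + 1) (by omega) (Or.inl (by omega))
          rw [hv, ← hIH j2 hj2] at hjv
          rcases hinclp j2 hj2 with h | h <;> omega
        · have ho2 : rq < rp := by omega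
          obtain ⟨j2, hj2, hjv⟩ := hsurjp (rq + 1) (by omega) (Or.inl (by omega))
          rw [← hv, hIH j2 hj2] at hjv
          rcases hinclq j2 hj2 with h | h <;> omega
      subst hreq
      have hnp := next_step hn0 p H hNCp hFp hi1 hrp hinclp hsurjp hendp
      have hnq := next_step hn0 q H hNCq hFq hi1 hrq hinclq hsurjq hendq
      have hPi : PP hn0 q i = PP hn0 p i := (hIH i le_rfl).symm
      rw [hv, hPi] at hnq hendq
      rcases hendp with hs | hs
      · have h1 := hnp.1 hs
        have h2 := hnq.1 hs
        rcases h1 with ⟨hm1, hv1⟩ | ⟨hm1, hv1⟩ <;> rcases h2 with ⟨hm2, hv2⟩ | ⟨hm2, hv2⟩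
        · exact dd_inj hn0 _ (by rw [hv1, ← hv2])
        · exact absurd hm1 hm2
        · exact absurd hm2 hm1
        · exact dd_inj hn0 _ (by rw [hv1, ← hv2])
      · have h1 := hnp.2 hs
        have h2 := hnq.2 hs
        rcases h1 with ⟨hm1, hv1⟩ | ⟨hm1, hv1⟩ <;> rcases h2 with ⟨hm2, hv2⟩ | ⟨hm2, hv2⟩
        · exact dd_inj hn0 _ (by rw [hv1, ← hv2])
        · exact absurd hm1 hm2
        · exact absurd hm2 hm1
        · exact dd_inj hn0 _ (by rw [hv1, ← hv2])
  intro i hi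
  exact main i hi i le_rfl
lemma fsucc_edge_inj (hn : 3 ≤ n) (hn0 : 0 < n) {z w : Fin n}
    (h : s(z, fsucc hn0 z) = s(w, fsucc hn0 w)) : z = w := by
  rcases Sym2.eq_iff.mp h with ⟨h1, _⟩ | ⟨h1, h2⟩
  · exact h1
  · have e1 := congrArg Fin.val h1
    have e2 := congrArg Fin.val h2
    rw [fsucc_val] at e1 e2
    have := z.isLt; have := w.isLt
    apply Fin.ext
    split_ifs at e1 e2 <;> omega

lemma fpred_edge_inj (hn : 3 ≤ n) (hn0 : 0 < n) {z w : Fin n}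
    (h : s(fpred hn0 z, z) = s(fpred hn0 w, w)) : z = w := by
  rcases Sym2.eq_iff.mp h with ⟨_, h2⟩ | ⟨h1, h2⟩
  · exact h2
  · have e1 := congrArg Fin.val h1
    have e2 := congrArg Fin.val h2
    rw [fpred_val] at e1 e2
    have := z.isLt; have := w.isLt
    apply Fin.ext
    split_ifs at e1 e2 <;> omega

/-- all hull edges -/
def hullF (hn0 : 0 < n) : Finset (Sym2 (Fin n)) :=
  Finset.image (fun z : Fin n => s(z, fsucc hn0 z)) Finset.univ

lemma mem_hullF (hn0 : 0 < n) {e : Sym2 (Fin n)} (he : IsHullEdge e) : e ∈ hullF hn0 := by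
  obtain ⟨a, b, rfl, hab | hab⟩ := he
  · have hb : b = fsucc hn0 a := by
      apply Fin.ext
      rw [fsucc_val]
      rcases lt_or_ge (a.val + 1) n with hcase | hcase
      · rw [if_pos hcase, ← hab, Nat.mod_eq_of_lt hcase]
      · have ha2 : a.val + 1 = n := by have := a.isLt; omega
        rw [if_neg (by omega), ← hab, ha2, Nat.mod_self]
    subst hb
    exact Finset.mem_image.mpr ⟨a, Finset.mem_univ _, rfl⟩
  · have hb : a = fsucc hn0 b := by
      apply Fin.ext
      rw [fsucc_val]
      rcases lt_or_ge (b.val + 1) n with hcase | hcase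
      · rw [if_pos hcase, ← hab, Nat.mod_eq_of_lt hcase]
      · have ha2 : b.val + 1 = n := by have := b.isLt; omega
        rw [if_neg (by omega), ← hab, ha2, Nat.mod_self]
    subst hb
    exact Finset.mem_image.mpr ⟨b, Finset.mem_univ _, Sym2.eq_swap⟩

lemma card_hullF (hn : 3 ≤ n) (hn0 : 0 < n) : (hullF hn0 : Finset (Sym2 (Fin n))).card = n := by
  unfold hullF
  rw [Finset.card_image_of_injective _ (fun z w h => fsucc_edge_inj hn hn0 h)]
  simp

lemma rev_pathEdges (p : Equiv.Perm (Fin n)) :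
    pathEdges (Fin.revPerm.trans p) = pathEdges p := by
  ext e
  simp only [mem_pathEdges_iff, Equiv.trans_apply, Fin.revPerm_apply]
  constructor
  · rintro ⟨i, j, rfl, hij⟩
    refine ⟨j.rev, i.rev, Sym2.eq_swap, ?_⟩
    rw [Fin.val_rev, Fin.val_rev]
    have := i.isLt; have := j.isLt
    omega
  · rintro ⟨i, j, rfl, hij⟩
    refine ⟨j.rev, i.rev, by rw [Fin.rev_rev, Fin.rev_rev]; exact Sym2.eq_swap, ?_⟩
    rw [Fin.val_rev, Fin.val_rev]
    have := i.isLt; have := j.isLt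
    omega

lemma rev_zero (hn0 : 0 < n) (p : Equiv.Perm (Fin n)) :
    PP hn0 (Fin.revPerm.trans p) 0 = PP hn0 p (n - 1) := by
  rw [PP_eq hn0 _ hn0, PP_eq hn0 p (by omega : n - 1 < n)]
  simp only [Equiv.trans_apply, Fin.revPerm_apply]
  exact congrArg p (Fin.ext (by simp [Fin.val_rev]))

lemma endpoint_lem (hn : 3 ≤ n) (hn0 : 0 < n) (p : Equiv.Perm (Fin n))
    (H : Finset (Sym2 (Fin n)))
    (hF : (pathEdges p).filter (fun e => IsHullEdge e) = H) :
    s(PP hn0 p 0, fsucc hn0 (PP hn0 p 0)) ∉ H ∨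
    s(fpred hn0 (PP hn0 p 0), PP hn0 p 0) ∉ H := by
  by_contra hc
  push_neg at hc
  obtain ⟨h1, h2⟩ := hc
  have hHsub : H ⊆ pathEdges p := by rw [← hF]; exact Finset.filter_subset _ _
  have e1 := edge_at hn0 p (hHsub h1) hn0 (Sym2.mem_mk_left _ _)
  have e2 := edge_at hn0 p (hHsub h2) hn0 (Sym2.mem_mk_right _ _)
  rcases e1 with ⟨_, e1⟩ | ⟨hh, _⟩
  · rcases e2 with ⟨_, e2⟩ | ⟨hh, _⟩
    · rcases Sym2.eq_iff.mp (e1.trans e2.symm) with ⟨h3, h4⟩ | ⟨_, h4⟩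
      · have v1 := congrArg Fin.val h4
        rw [fsucc_val] at v1
        have hlt := (PP hn0 p 0).isLt
        split_ifs at v1 <;> omega
      · have v1 := congrArg Fin.val h4
        rw [fsucc_val, fpred_val] at v1
        have hlt := (PP hn0 p 0).isLt
        split_ifs at v1 <;> omega
    · omega
  · omega
end Main

theorem completions_le' (n : ℕ) (hn : 3 ≤ n) (H : Finset (Sym2 (Fin n)))
    (hH : ∀ e ∈ H, IsHullEdge e) :
    {w : PVert n | w.1.filter (fun e => IsHullEdge e) = H}.ncard ≤ n - H.card := by
  classical
  have hn0 : 0 < n := by omega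
  set SF : Finset (PVert n) :=
    Finset.univ.filter (fun w : PVert n => w.1.filter (fun e => IsHullEdge e) = H) with hSF
  have hset : {w : PVert n | w.1.filter (fun e => IsHullEdge e) = H} = ↑SF := by
    ext w
    simp [hSF]
  rw [hset, Set.ncard_coe_finset]
  set TF : Finset (Fin n) := Finset.univ.filter (fun z : Fin n =>
    s(z, fsucc hn0 z) ∉ H ∨ s(fpred hn0 z, z) ∉ H) with hTF
  have hex : ∀ w : PVert n, ∃ p : Equiv.Perm (Fin n), w.1 = pathEdges p := fun w => w.2.1
  choose pm hpm using hex
  set pp : PVert n → Bool → Equiv.Perm (Fin n) :=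
    fun w b => if b then Fin.revPerm.trans (pm w) else pm w with hppdef
  have hppE : ∀ w b, pathEdges (pp w b) = w.1 := by
    intro w b
    cases b
    · simpa [hppdef] using (hpm w).symm
    · simp only [hppdef, if_pos]
      rw [rev_pathEdges]
      exact (hpm w).symm
  have hNCw : ∀ w b, ∀ e ∈ pathEdges (pp w b), ∀ f ∈ pathEdges (pp w b), ¬ Crosses e f := by
    intro w b
    rw [hppE w b]
    exact w.2.2
  have hFw : ∀ w ∈ SF, ∀ b, (pathEdges (pp w b)).filter (fun e => IsHullEdge e) = H := by
    intro w hw b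
    rw [hppE w b]
    exact (Finset.mem_filter.mp hw).2
  set F : PVert n × Bool → Fin n := fun z => PP hn0 (pp z.1 z.2) 0 with hFdef
  have hmaps : ∀ z ∈ SF ×ˢ (Finset.univ : Finset Bool), F z ∈ TF := by
    rintro ⟨w, b⟩ hz
    rw [Finset.mem_product] at hz
    have hend := endpoint_lem hn hn0 (pp w b) H (hFw w hz.1 b)
    rw [hTF, Finset.mem_filter]
    exact ⟨Finset.mem_univ _, hend⟩
  have hinj : Set.InjOn F ↑(SF ×ˢ (Finset.univ : Finset Bool)) := by
    rintro ⟨w, b⟩ hz ⟨w', b'⟩ hz' hFeq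
    have hw : w ∈ SF := (Finset.mem_product.mp (Finset.mem_coe.mp hz)).1
    have hw' : w' ∈ SF := (Finset.mem_product.mp (Finset.mem_coe.mp hz')).1
    have huq := uniq hn0 (pp w b) (pp w' b') H (hNCw w b) (hFw w hw b)
      (hNCw w' b') (hFw w' hw' b') hFeq
    have hperm : pp w b = pp w' b' := by
      apply Equiv.ext
      intro x
      have hx := huq x.val x.isLt
      rw [PP_eq hn0 _ x.isLt, PP_eq hn0 _ x.isLt] at hx
      simpa using hx
    have hww : w = w' := Subtype.ext (by rw [← hppE w b, ← hppE w' b', hperm])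
    subst hww
    have hbb : b = b' := by
      by_contra hbne
      have key : PP hn0 (pm w) 0 = PP hn0 (Fin.revPerm.trans (pm w)) 0 := by
        cases b <;> cases b'
        · exact absurd rfl hbne
        · exact hFeq
        · exact hFeq.symm
        · exact absurd rfl hbne
      rw [rev_zero hn0] at key
      have h01 := PP_inj hn0 (pm w) hn0 (by omega : n - 1 < n) key
      omega
    rw [hbb]
  have hcard1 := Finset.card_le_card_of_injOn F hmaps hinj
  rw [Finset.card_product] at hcard1
  have hbool : (Finset.univ : Finset Bool).card = 2 := by simp
  rw [hbool] at hcard1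
  set M : Finset (Sym2 (Fin n)) := hullF hn0 \ H with hM
  have hHsubhull : H ⊆ hullF hn0 := fun e he => mem_hullF hn0 (hH e he)
  have hMcard : M.card = n - H.card := by
    rw [hM, Finset.card_sdiff_of_subset hHsubhull, card_hullF hn hn0]
  set G : Fin n → Sym2 (Fin n) × Bool := fun z =>
    if s(z, fsucc hn0 z) ∈ H then (s(fpred hn0 z, z), true)
    else (s(z, fsucc hn0 z), false) with hG
  have hmaps2 : ∀ z ∈ TF, G z ∈ M ×ˢ (Finset.univ : Finset Bool) := by
    intro z hz
    rw [hTF, Finset.mem_filter] at hz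
    rw [Finset.mem_product]
    refine ⟨?_, Finset.mem_univ _⟩
    by_cases hc : s(z, fsucc hn0 z) ∈ H
    · have h2 : s(fpred hn0 z, z) ∉ H := by tauto
      rw [hG]
      simp only [if_pos hc]
      rw [hM, Finset.mem_sdiff]
      refine ⟨?_, h2⟩
      have hrw : s(fpred hn0 z, z) = s(fpred hn0 z, fsucc hn0 (fpred hn0 z)) := by
        rw [fsucc_fpred]
      rw [hrw]
      exact Finset.mem_image.mpr ⟨_, Finset.mem_univ _, rfl⟩
    · rw [hG]
      simp only [if_neg hc]
      rw [hM, Finset.mem_sdiff]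
      exact ⟨Finset.mem_image.mpr ⟨z, Finset.mem_univ _, rfl⟩, hc⟩
  have hinj2 : Set.InjOn G ↑TF := by
    intro z hz z' hz' hGe
    rw [hG] at hGe
    simp only at hGe
    by_cases hc : s(z, fsucc hn0 z) ∈ H <;> by_cases hc' : s(z', fsucc hn0 z') ∈ H
    · rw [if_pos hc, if_pos hc'] at hGe
      exact fpred_edge_inj hn hn0 (congrArg Prod.fst hGe)
    · rw [if_pos hc, if_neg hc'] at hGe
      exact absurd (congrArg Prod.snd hGe) (by simp)
    · rw [if_neg hc, if_pos hc'] at hGe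
      exact absurd (congrArg Prod.snd hGe) (by simp)
    · rw [if_neg hc, if_neg hc'] at hGe
      exact fsucc_edge_inj hn hn0 (congrArg Prod.fst hGe)
  have hcard2 := Finset.card_le_card_of_injOn G hmaps2 hinj2
  rw [Finset.card_product, hbool, hMcard] at hcard2
  omega

/-- Let `H` be a set of hull edges; it decomposes into `k = n - |H|` disjoint
boundary arcs (possibly degenerate) covering the vertices in cyclic order.
Then there are at most `k` plane spanning paths whose set of hull edges is
exactly `H` (each obtained by adding `k - 1` diagonals). -/
theorem completions_le (n : ℕ) (hn : 3 ≤ n) (H : Finset (Sym2 (Fin n)))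
    (hH : ∀ e ∈ H, IsHullEdge e) :
    {w : PVert n | w.1.filter (fun e => IsHullEdge e) = H}.ncard ≤ n - H.card :=
  completions_le' n hn H hH

end PG
end

section
/- The number of non-crossing spanning paths of a set of n ≥ 3 points in convex position in the plane is exactly n·2^{n-3} for n ≥ 3 (interpreting this as 1 for n=2). -/
namespace PG

section Aux

variable {n : ℕ}

/-- relative cyclic position from `a` to `b`. -/
def relv (n : ℕ) (a b : Fin n) : ℕ := (b.val + n - a.val) % n

lemma relv_eq (a b : Fin n) :
    relv n a b = if b.val < a.val then b.val + n - a.val else b.val - a.val := by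
  have ha := a.isLt; have hb := b.isLt
  unfold relv
  split_ifs with h
  · exact Nat.mod_eq_of_lt (by omega)
  · have h1 : b.val + n - a.val = (b.val - a.val) + n := by omega
    rw [h1, Nat.add_mod_right]
    exact Nat.mod_eq_of_lt (by omega)

lemma relv_lt (hn0 : 0 < n) (a b : Fin n) : relv n a b < n := Nat.mod_lt _ hn0

lemma relv_pos (a b : Fin n) (h : a ≠ b) : 0 < relv n a b := by
  have ha := a.isLt; have hb := b.isLt
  have : a.val ≠ b.val := fun hh => h (Fin.ext hh)
  rw [relv_eq]; split_ifs <;> omega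

lemma relv_inj (a b c : Fin n) (h : relv n a b = relv n a c) : b = c := by
  have ha := a.isLt; have hb := b.isLt; have hc := c.isLt
  rw [relv_eq, relv_eq] at h
  apply Fin.ext
  split_ifs at h <;> omega

/-- swap lemma: measuring from the other endpoint. -/
lemma relv_swap {a b x : Fin n} (hab : a ≠ b) (hxa : x ≠ a) (hxb : x ≠ b) :
    (relv n b x < relv n b a) ↔ ¬ (relv n a x < relv n a b) := by
  have ha := a.isLt; have hb := b.isLt; have hx := x.isLt
  have h1 : a.val ≠ b.val := fun hh => hab (Fin.ext hh)
  have h2 : x.val ≠ a.val := fun hh => hxa (Fin.ext hh)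
  have h3 : x.val ≠ b.val := fun hh => hxb (Fin.ext hh)
  rw [relv_eq, relv_eq, relv_eq, relv_eq]
  split_ifs <;> omega

/-- change of base point for relative position. -/
lemma relv_comp (a b c : Fin n) :
    relv n b c = if relv n a c < relv n a b then relv n a c + n - relv n a b
      else relv n a c - relv n a b := by
  have ha := a.isLt; have hb := b.isLt; have hc := c.isLt
  rw [relv_eq, relv_eq, relv_eq]
  split_ifs <;> omega

lemma not_crosses_of_mem {e f : Sym2 (Fin n)} (x : Fin n) (hx : x ∈ e) (hx' : x ∈ f) :
    ¬ Crosses e f := by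
  rintro ⟨a, b, c, d, rfl, rfl, hab, hcd, hac, had, hbc, hbd, _⟩
  rw [Sym2.mem_iff] at hx hx'
  rcases hx with rfl | rfl <;> rcases hx' with rfl | rfl <;> simp_all

lemma crosses_iff {a b c d : Fin n} (hab : a ≠ b) (hcd : c ≠ d) (hac : a ≠ c)
    (had : a ≠ d) (hbc : b ≠ c) (hbd : b ≠ d) :
    Crosses s(a,b) s(c,d) ↔
      ((relv n a c < relv n a b) ↔ ¬ (relv n a d < relv n a b)) := by
  constructor
  · rintro ⟨a', b', c', d', he, hf, hab', hcd', hac', had', hbc', hbd', hcond⟩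
    rw [Sym2.eq_iff] at he hf
    have hswap : ∀ x : Fin n, x ≠ a → x ≠ b →
        ((relv n b x < relv n b a) ↔ ¬ (relv n a x < relv n a b)) := by
      intro x h1 h2; exact relv_swap hab h1 h2
    rcases he with ⟨rfl, rfl⟩ | ⟨rfl, rfl⟩ <;> rcases hf with ⟨rfl, rfl⟩ | ⟨rfl, rfl⟩
    · exact hcond
    · change ((relv n a d < relv n a b) ↔ ¬(relv n a c < relv n a b)) at hcond
      tauto
    · have hc := hswap c hac.symm hbc.symm
      have hd := hswap d had.symm hbd.symm
      change ((relv n b c < relv n b a) ↔ ¬(relv n b d < relv n b a)) at hcond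
      tauto
    · have hc := hswap c hac.symm hbc.symm
      have hd := hswap d had.symm hbd.symm
      change ((relv n b d < relv n b a) ↔ ¬(relv n b c < relv n b a)) at hcond
      tauto
  · intro h
    exact ⟨a, b, c, d, rfl, rfl, hab, hcd, hac, had, hbc, hbd, h⟩

lemma crosses_symm {e f : Sym2 (Fin n)} (h : Crosses e f) : Crosses f e := by
  obtain ⟨a, b, c, d, rfl, rfl, hab, hcd, hac, had, hbc, hbd, hcond⟩ := h
  refine ⟨c, d, a, b, rfl, rfl, hcd, hab, hac.symm, hbc.symm, had.symm, hbd.symm, ?_⟩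
  have ha := a.isLt; have hb := b.isLt; have hc := c.isLt; have hd := d.isLt
  have h1 : a.val ≠ b.val := fun hh => hab (Fin.ext hh)
  have h2 : c.val ≠ d.val := fun hh => hcd (Fin.ext hh)
  have h3 : a.val ≠ c.val := fun hh => hac (Fin.ext hh)
  have h4 : a.val ≠ d.val := fun hh => had (Fin.ext hh)
  have h5 : b.val ≠ c.val := fun hh => hbc (Fin.ext hh)
  have h6 : b.val ≠ d.val := fun hh => hbd (Fin.ext hh)
  have e1 := relv_eq a b; have e2 := relv_eq a c; have e3 := relv_eq a d
  have e4 := relv_eq c d; have e5 := relv_eq c a; have e6 := relv_eq c b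
  change ((relv n c a < relv n c d) ↔ ¬(relv n c b < relv n c d))
  change ((relv n a c < relv n a b) ↔ ¬(relv n a d < relv n a b)) at hcond
  rw [e2, e1, e3] at hcond
  rw [e5, e4, e6]
  split_ifs at hcond ⊢ <;> omega

end Aux


section Stair

variable {n : ℕ}

/-- number of `true` bits among the first `i` bits. -/
def Hc (g : ℕ → Bool) (i : ℕ) : ℕ := ((Finset.range i).filter (fun j => g j = true)).card

/-- the relative position of the `i`-th vertex of the decoded staircase path. -/
def rfun (n : ℕ) (g : ℕ → Bool) (i : ℕ) : ℕ :=
  if i = 0 then 0 else if g (i-1) then Hc g i else n - (i - Hc g i)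

lemma Hc_zero (g : ℕ → Bool) : Hc g 0 = 0 := rfl

lemma Hc_succ (g : ℕ → Bool) (i : ℕ) :
    Hc g (i+1) = Hc g i + (if g i then 1 else 0) := by
  unfold Hc
  rw [Finset.range_add_one, Finset.filter_insert]
  split_ifs with h
  · rw [Finset.card_insert_of_notMem (by simp)]
  · rfl

lemma Hc_le (g : ℕ → Bool) (i : ℕ) : Hc g i ≤ i := by
  calc Hc g i ≤ (Finset.range i).card := Finset.card_filter_le _ _
  _ = i := Finset.card_range i

lemma Hc_mono (g : ℕ → Bool) {i j : ℕ} (h : i ≤ j) : Hc g i ≤ Hc g j :=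
  Finset.card_le_card (Finset.filter_subset_filter _ (by simpa using Finset.range_subset_range.mpr h))

lemma Hc_add_le (g : ℕ → Bool) {i j : ℕ} (h : i ≤ j) : Hc g j ≤ Hc g i + (j - i) := by
  obtain ⟨d, rfl⟩ := Nat.exists_eq_add_of_le h
  induction d with
  | zero => simp
  | succ d ih =>
    have e : i + (d + 1) = (i + d) + 1 := by omega
    rw [e, Hc_succ]
    split_ifs <;> omega

lemma Li_mono (g : ℕ → Bool) {i j : ℕ} (h : i ≤ j) : i - Hc g i ≤ j - Hc g j := by
  have := Hc_add_le g h; have := Hc_le g i; omega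

/-- previously placed vertices lie in the current arc. -/
lemma rfun_old_in (g : ℕ → Bool) {j k : ℕ} (hjk : j ≤ k) (hk : k ≤ n - 1) :
    rfun n g j ≤ Hc g k ∨ n - (k - Hc g k) ≤ rfun n g j := by
  unfold rfun
  split_ifs with h0 hg
  · left; omega
  · left; exact Hc_mono g hjk
  · right
    have := Li_mono g hjk
    omega

/-- later vertices lie strictly outside the current arc. -/
lemma rfun_new_out (hn0 : 0 < n) (g : ℕ → Bool) {j k : ℕ} (hkj : k < j) (hj : j ≤ n - 1) :
    Hc g k < rfun n g j ∧ rfun n g j < n - (k - Hc g k) := by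
  obtain ⟨m, rfl⟩ : ∃ m, j = m + 1 := ⟨j - 1, by omega⟩
  have hm : Hc g k ≤ Hc g m := Hc_mono g (by omega)
  have hLm : k - Hc g k ≤ m - Hc g m := Li_mono g (by omega)
  have hHs : Hc g (m+1) = Hc g m + (if g m then 1 else 0) := Hc_succ g m
  have hle1 := Hc_le g (m+1)
  have hle2 := Hc_le g m
  have hle3 := Hc_le g k
  have hkn : k ≤ n - 1 := by omega
  unfold rfun
  have e : m + 1 - 1 = m := by omega
  rw [e]
  split_ifs at hHs ⊢ with hg h2
  all_goals first | omega | (exfalso; assumption)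

lemma rfun_lt (hn0 : 0 < n) (g : ℕ → Bool) {j : ℕ} (hj : j ≤ n - 1) : rfun n g j < n := by
  rcases Nat.eq_zero_or_pos j with rfl | hp
  · have h0 : rfun n g 0 = 0 := by unfold rfun; rw [if_pos rfl]
    rw [h0]; exact hn0
  · have := rfun_new_out hn0 g (Nat.sub_lt hp Nat.one_pos) hj
    have := Hc_le g (j-1); omega

lemma rfun_ne (hn0 : 0 < n) (g : ℕ → Bool) {j k : ℕ} (hjk : j < k) (hk : k ≤ n - 1) :
    rfun n g j ≠ rfun n g k := by
  have h1 := rfun_new_out hn0 g hjk hk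
  have h2 := rfun_old_in g (le_refl j) (le_trans (le_of_lt hjk) hk)
  omega

/-- the first `i+1` vertices fill the whole arc. -/
lemma rfun_full (hn0 : 0 < n) (g : ℕ → Bool) :
    ∀ i, i ≤ n - 1 → ∀ t, t < n → (t ≤ Hc g i ∨ n - (i - Hc g i) ≤ t) →
      ∃ j, j ≤ i ∧ rfun n g j = t := by
  intro i
  induction i with
  | zero =>
    intro _ t ht hcase
    refine ⟨0, le_refl 0, ?_⟩
    simp only [Hc_zero] at hcase
    have h0 : rfun n g 0 = 0 := by unfold rfun; rw [if_pos rfl]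
    omega
  | succ i ih =>
    intro hi t ht hcase
    have hHs := Hc_succ g i
    have hle := Hc_le g (i+1)
    have hle2 := Hc_le g i
    have hrs : rfun n g (i+1) = if g i then Hc g (i+1) else n - ((i+1) - Hc g (i+1)) := by
      unfold rfun
      have e : i + 1 - 1 = i := by omega
      rw [if_neg (by omega), e]
    by_cases hg : g i
    · rw [if_pos hg] at hHs hrs
      have hd : (i+1) - Hc g (i+1) = i - Hc g i := by omega
      rcases hcase with hlo | hhi
      · rcases Nat.lt_or_ge t (Hc g (i+1)) with hlt | hge
        · obtain ⟨j, hj, hrj⟩ := ih (by omega) t ht (Or.inl (by omega))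
          exact ⟨j, by omega, hrj⟩
        · exact ⟨i+1, le_refl _, by omega⟩
      · obtain ⟨j, hj, hrj⟩ := ih (by omega) t ht (Or.inr (by omega))
        exact ⟨j, by omega, hrj⟩
    · rw [if_neg hg] at hHs hrs
      have hd : Hc g (i+1) = Hc g i := by omega
      rcases hcase with hlo | hhi
      · obtain ⟨j, hj, hrj⟩ := ih (by omega) t ht (Or.inl (by omega))
        exact ⟨j, by omega, hrj⟩
      · rcases Nat.lt_or_ge (n - (i - Hc g i)) (t+1) with hlt | hge
        · obtain ⟨j, hj, hrj⟩ := ih (by omega) t ht (Or.inr (by omega))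
          exact ⟨j, by omega, hrj⟩
        · exact ⟨i+1, le_refl _, by omega⟩

/-- `rfun` only depends on bits below `n - 2` (for positions up to `n-1`). -/
lemma rfun_congr (hn3 : 3 ≤ n) {g g' : ℕ → Bool} (h : ∀ k, k < n - 2 → g k = g' k)
    {j : ℕ} (hj : j ≤ n - 1) : rfun n g j = rfun n g' j := by
  have hHc : ∀ m, m ≤ n - 2 → Hc g m = Hc g' m := by
    intro m hm
    unfold Hc
    congr 1
    apply Finset.filter_congr
    intro x hx
    rw [Finset.mem_range] at hx
    rw [h x (by omega)]
  rcases Nat.eq_zero_or_pos j with rfl | hp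
  · simp [rfun]
  rcases Nat.lt_or_ge j (n-1) with hlt | hge
  · unfold rfun
    rw [h (j-1) (by omega), hHc j (by omega)]
  · have hj' : j = n - 1 := by omega
    subst hj'
    have hH2 : Hc g (n-2) = Hc g' (n-2) := hHc _ (le_refl _)
    have e1 : (n-1) = (n-2) + 1 := by omega
    have hs1 : Hc g (n-1) = Hc g (n-2) + (if g (n-2) then 1 else 0) := by
      conv_lhs => rw [e1]
      rw [Hc_succ]
    have hs2 : Hc g' (n-1) = Hc g' (n-2) + (if g' (n-2) then 1 else 0) := by
      conv_lhs => rw [e1]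
      rw [Hc_succ]
    have hL1 := Hc_le g (n-2)
    have hL2 := Hc_le g' (n-2)
    have e2 : (n-1) - 1 = n - 2 := by omega
    have e3 : rfun n g (n-1) = if g (n-2) then Hc g (n-1) else n - ((n-1) - Hc g (n-1)) := by
      unfold rfun; rw [if_neg (by omega), e2]
    have e4 : rfun n g' (n-1) = if g' (n-2) then Hc g' (n-1) else n - ((n-1) - Hc g' (n-1)) := by
      unfold rfun; rw [if_neg (by omega), e2]
    rw [e3, e4]
    cases hb1 : g (n-2) <;> cases hb2 : g' (n-2) <;>
      simp only [hb1, hb2] at hs1 hs2 ⊢ <;>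
      simp at hs1 hs2 ⊢ <;> omega

end Stair


section Decode

variable {n : ℕ}

lemma pt_val (hn0 : 0 < n) (k : ℕ) : (pt n hn0 k).val = k % n := rfl

lemma pt_val_eq (hn0 : 0 < n) (a : Fin n) : pt n hn0 a.val = a :=
  Fin.ext (Nat.mod_eq_of_lt a.isLt)

lemma pt_val_small (hn0 : 0 < n) {k : ℕ} (h : k < n) : (pt n hn0 k).val = k :=
  Nat.mod_eq_of_lt h

lemma relv_pt (hn0 : 0 < n) (s x y : ℕ) (hx : x < n) (hy : y < n) :
    relv n (pt n hn0 (s + x)) (pt n hn0 (s + y)) = if y < x then y + n - x else y - x := by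
  have hs' : s % n < n := Nat.mod_lt _ hn0
  have hA : (s + x) % n = if s % n + x < n then s % n + x else s % n + x - n := by
    rw [Nat.add_mod, Nat.mod_eq_of_lt hx]
    split_ifs with h
    · exact Nat.mod_eq_of_lt h
    · rw [Nat.mod_eq_sub_mod (by omega)]
      exact Nat.mod_eq_of_lt (by omega)
  have hB : (s + y) % n = if s % n + y < n then s % n + y else s % n + y - n := by
    rw [Nat.add_mod, Nat.mod_eq_of_lt hy]
    split_ifs with h
    · exact Nat.mod_eq_of_lt h
    · rw [Nat.mod_eq_sub_mod (by omega)]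
      exact Nat.mod_eq_of_lt (by omega)
  rw [relv_eq, pt_val, pt_val, hA, hB]
  split_ifs <;> omega

lemma pt_add_relv (hn0 : 0 < n) (a b : Fin n) : pt n hn0 (a.val + relv n a b) = b := by
  have ha := a.isLt; have hb := b.isLt
  have h := relv_eq a b
  apply Fin.ext
  rw [pt_val]
  rcases Nat.lt_or_ge b.val a.val with hlt | hge
  · have e : a.val + relv n a b = b.val + n := by rw [h, if_pos hlt]; omega
    rw [e, Nat.add_mod_right, Nat.mod_eq_of_lt hb]
  · have e : a.val + relv n a b = b.val := by rw [h, if_neg (by omega)]; omega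
    rw [e, Nat.mod_eq_of_lt hb]

/-- the decoded spanning path, as a function. -/
def decf (n : ℕ) (hn0 : 0 < n) (s : ℕ) (g : ℕ → Bool) : Fin n → Fin n :=
  fun i => pt n hn0 (s + rfun n g i.val)

lemma decf_injective (hn0 : 0 < n) (s : ℕ) (g : ℕ → Bool) :
    Function.Injective (decf n hn0 s g) := by
  intro i j h
  have hval : (s + rfun n g i.val) % n = (s + rfun n g j.val) % n := congrArg Fin.val h
  have hml : rfun n g i.val % n = rfun n g j.val % n :=
    Nat.ModEq.add_left_cancel' s hval
  have hi' : i.val ≤ n - 1 := by have := i.isLt; omega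
  have hj' : j.val ≤ n - 1 := by have := j.isLt; omega
  have h1 : rfun n g i.val < n := rfun_lt hn0 g hi'
  have h2 : rfun n g j.val < n := rfun_lt hn0 g hj'
  rw [Nat.mod_eq_of_lt h1, Nat.mod_eq_of_lt h2] at hml
  rcases Nat.lt_trichotomy i.val j.val with hlt | heq | hgt
  · exact absurd hml (rfun_ne hn0 g hlt hj')
  · exact Fin.ext heq
  · exact absurd hml.symm (rfun_ne hn0 g hgt hi')

/-- the decoded spanning path, as a permutation. -/
noncomputable def decp (n : ℕ) (hn0 : 0 < n) (s : ℕ) (g : ℕ → Bool) : Equiv.Perm (Fin n) :=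
  Equiv.ofBijective _ (Finite.injective_iff_bijective.mp (decf_injective hn0 s g))

lemma decp_apply (hn0 : 0 < n) (s : ℕ) (g : ℕ → Bool) (i : Fin n) :
    decp n hn0 s g i = pt n hn0 (s + rfun n g i.val) := rfl

lemma mem_pathEdges {p : Equiv.Perm (Fin n)} {e : Sym2 (Fin n)} :
    e ∈ pathEdges p ↔ ∃ i j : Fin n, e = s(p i, p j) ∧ j.val = i.val + 1 := by
  unfold pathEdges
  simp

/-- points strictly outside the arc of the first `i+2` vertices lie on a
constant side of the `i`-th edge of the decoded path. -/
lemma inside_const (hn0 : 0 < n) (s : ℕ) (g : ℕ → Bool) (i : ℕ) (hi : i + 1 ≤ n - 1)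
    (x : ℕ) (hx1 : Hc g (i+1) < x) (hx2 : x < n - ((i+1) - Hc g (i+1))) :
    ((relv n (pt n hn0 (s + rfun n g i)) (pt n hn0 (s + x)) <
      relv n (pt n hn0 (s + rfun n g i)) (pt n hn0 (s + rfun n g (i+1)))) ↔ g i = false) := by
  have hL : (i+1) - Hc g (i+1) ≤ n := by have := Hc_le g (i+1); omega
  have hx : x < n := by omega
  have hr1 : rfun n g i < n := rfun_lt hn0 g (by omega)
  have hr2 : rfun n g (i+1) < n := rfun_lt hn0 g hi
  rw [relv_pt hn0 s _ _ hr1 hx, relv_pt hn0 s _ _ hr1 hr2]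
  have hHs := Hc_succ g i
  have hold := rfun_old_in g (le_refl i) (le_trans (by omega) hi)
  have hr2v : rfun n g (i+1) = if g i then Hc g (i+1) else n - ((i+1) - Hc g (i+1)) := by
    unfold rfun
    have e : i + 1 - 1 = i := by omega
    rw [if_neg (by omega), e]
  have hle1 := Hc_le g i
  have hle2 := Hc_le g (i+1)
  cases hb : g i
  · rw [hb] at hr2v hHs
    simp at hr2v hHs
    refine iff_of_true ?_ rfl
    split_ifs <;> omega
  · rw [hb] at hr2v hHs
    simp at hr2v hHs
    refine iff_of_false ?_ (by simp)
    intro hcon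
    split_ifs at hcon <;> omega

/-- decoded paths are non-crossing. -/
lemma decode_nc (hn0 : 0 < n) (s : ℕ) (g : ℕ → Bool) :
    IsNCPath (pathEdges (decp n hn0 s g)) := by
  refine ⟨⟨_, rfl⟩, ?_⟩
  have hp : Function.Injective (decp n hn0 s g) := (decp n hn0 s g).injective
  have key : ∀ i i' k k' : Fin n, i'.val = i.val + 1 → k'.val = k.val + 1 →
      i.val + 1 < k.val →
      ¬ Crosses s((decp n hn0 s g) i, (decp n hn0 s g) i')
        s((decp n hn0 s g) k, (decp n hn0 s g) k') := by
    intro i i' k k' hii hkk hik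
    set p := decp n hn0 s g with hpdef
    have hki := k.isLt
    have hki' := k'.isLt
    have hd1 : i ≠ i' := Fin.ne_of_val_ne (by omega)
    have hd2 : k ≠ k' := Fin.ne_of_val_ne (by omega)
    have hd3 : i ≠ k := Fin.ne_of_val_ne (by omega)
    have hd4 : i ≠ k' := Fin.ne_of_val_ne (by omega)
    have hd5 : i' ≠ k := Fin.ne_of_val_ne (by omega)
    have hd6 : i' ≠ k' := Fin.ne_of_val_ne (by omega)
    rw [crosses_iff (hp.ne hd1) (hp.ne hd2) (hp.ne hd3) (hp.ne hd4) (hp.ne hd5) (hp.ne hd6)]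
    have hout1 := rfun_new_out (g := g) hn0 (j := k.val) (k := i.val + 1) (by omega) (by omega)
    have hout2 := rfun_new_out (g := g) hn0 (j := k'.val) (k := i.val + 1) (by omega) (by omega)
    have h1 := inside_const hn0 s g i.val (by omega) (rfun n g k.val) hout1.1 hout1.2
    have h2 := inside_const hn0 s g i.val (by omega) (rfun n g k'.val) hout2.1 hout2.2
    have ei' : p i' = pt n hn0 (s + rfun n g (i.val + 1)) := by
      rw [hpdef, decp_apply, hii]
    have ek : p k = pt n hn0 (s + rfun n g k.val) := by rw [hpdef, decp_apply]
    have ek' : p k' = pt n hn0 (s + rfun n g k'.val) := by rw [hpdef, decp_apply]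
    have ei : p i = pt n hn0 (s + rfun n g i.val) := by rw [hpdef, decp_apply]
    rw [ei, ei', ek, ek']
    rw [h1, h2]
    tauto
  intro e he f hf
  rw [mem_pathEdges] at he hf
  obtain ⟨i, i', rfl, hii⟩ := he
  obtain ⟨k, k', rfl, hkk⟩ := hf
  rcases Nat.lt_trichotomy i.val k.val with hlt | heq | hgt
  · rcases Nat.lt_or_ge (i.val + 1) k.val with h2 | h2
    · exact key i i' k k' hii hkk h2
    · have : i' = k := Fin.ext (by omega)
      apply not_crosses_of_mem ((decp n hn0 s g) k)
      · rw [← this]; exact Sym2.mem_mk_right _ _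
      · exact Sym2.mem_mk_left _ _
  · have : i = k := Fin.ext heq
    apply not_crosses_of_mem ((decp n hn0 s g) k)
    · rw [← this]; exact Sym2.mem_mk_left _ _
    · exact Sym2.mem_mk_left _ _
  · rcases Nat.lt_or_ge (k.val + 1) i.val with h2 | h2
    · intro hc
      exact key k k' i i' hkk hii h2 (crosses_symm hc)
    · have : k' = i := Fin.ext (by omega)
      apply not_crosses_of_mem ((decp n hn0 s g) i)
      · exact Sym2.mem_mk_left _ _
      · rw [← this]; exact Sym2.mem_mk_right _ _

end Decode


section Reconstruct

variable {n : ℕ}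

lemma relv_self (a : Fin n) : relv n a a = 0 := by
  unfold relv
  have := a.isLt
  have e : a.val + n - a.val = n := by omega
  rw [e, Nat.mod_self]

lemma relv_pt_right (hn0 : 0 < n) (a : Fin n) {t : ℕ} (ht : t < n) :
    relv n a (pt n hn0 (a.val + t)) = t := by
  have h0 : pt n hn0 (a.val + 0) = a := by rw [Nat.add_zero]; exact pt_val_eq hn0 a
  calc relv n a (pt n hn0 (a.val + t))
      = relv n (pt n hn0 (a.val + 0)) (pt n hn0 (a.val + t)) := by rw [h0]
    _ = if t < 0 then t + n - 0 else t - 0 := relv_pt hn0 a.val 0 t hn0 ht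
    _ = t := by rw [if_neg (by omega)]; omega

lemma Hc_agree {g g' : ℕ → Bool} {j : ℕ} (h : ∀ m, m < j → g m = g' m) :
    Hc g j = Hc g' j := by
  unfold Hc
  congr 1
  apply Finset.filter_congr
  intro x hx
  rw [Finset.mem_range] at hx
  rw [h x hx]

lemma rfun_agree {g g' : ℕ → Bool} {j : ℕ} (h : ∀ m, m < j → g m = g' m) :
    rfun n g j = rfun n g' j := by
  unfold rfun
  rcases Nat.eq_zero_or_pos j with rfl | hp
  · rfl
  · rw [h (j-1) (by omega), Hc_agree h]

lemma switch (P : ℕ → Prop) [DecidablePred P] :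
    ∀ b a, a ≤ b → P a → ¬ P b → ∃ k, a ≤ k ∧ k < b ∧ P k ∧ ¬ P (k+1) := by
  intro b
  induction b with
  | zero =>
    intro a h hp hq
    have : a = 0 := by omega
    subst this
    exact absurd hp hq
  | succ b ih =>
    intro a h hp hq
    have ha : a ≤ b := by
      by_contra hh
      have : a = b + 1 := by omega
      exact hq (this ▸ hp)
    by_cases hb : P b
    · exact ⟨b, ha, by omega, hb, hq⟩
    · obtain ⟨k, h1, h2, h3, h4⟩ := ih a ha hp hb
      exact ⟨k, h1, by omega, h3, h4⟩

/-- relative position of the `j`-th point of the path w.r.t. the starting point. -/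
def rpv (n : ℕ) (hn0 : 0 < n) (p : Equiv.Perm (Fin n)) (j : ℕ) : ℕ :=
  relv n (p (pt n hn0 0)) (p (pt n hn0 j))

lemma rpv_def (hn0 : 0 < n) (p : Equiv.Perm (Fin n)) (j : ℕ) :
    relv n (p (pt n hn0 0)) (p (pt n hn0 j)) = rpv n hn0 p j := rfl

lemma rpv_zero (hn0 : 0 < n) (p : Equiv.Perm (Fin n)) : rpv n hn0 p 0 = 0 :=
  relv_self _

lemma rpv_lt (hn0 : 0 < n) (p : Equiv.Perm (Fin n)) (j : ℕ) : rpv n hn0 p j < n :=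
  relv_lt hn0 _ _

lemma rpv_inj (hn0 : 0 < n) (p : Equiv.Perm (Fin n)) {j k : ℕ} (hj : j < n) (hk : k < n)
    (h : rpv n hn0 p j = rpv n hn0 p k) : j = k := by
  have h1 : p (pt n hn0 j) = p (pt n hn0 k) := relv_inj _ _ _ h
  have h2 : pt n hn0 j = pt n hn0 k := p.injective h1
  have h3 : (pt n hn0 j).val = (pt n hn0 k).val := congrArg Fin.val h2
  rwa [pt_val_small hn0 hj, pt_val_small hn0 hk] at h3

lemma rpv_surj (hn0 : 0 < n) (p : Equiv.Perm (Fin n)) {t : ℕ} (ht : t < n) :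
    ∃ j, j < n ∧ rpv n hn0 p j = t := by
  refine ⟨(p.symm (pt n hn0 ((p (pt n hn0 0)).val + t))).val, Fin.isLt _, ?_⟩
  unfold rpv
  rw [pt_val_eq hn0 (p.symm _), Equiv.apply_symm_apply]
  exact relv_pt_right hn0 _ ht

lemma edge_mem (hn0 : 0 < n) (p : Equiv.Perm (Fin n)) {i : ℕ} (hi : i + 1 < n) :
    s(p (pt n hn0 i), p (pt n hn0 (i+1))) ∈ pathEdges p := by
  rw [mem_pathEdges]
  exact ⟨pt n hn0 i, pt n hn0 (i+1), rfl,
    by rw [pt_val_small hn0 hi, pt_val_small hn0 (by omega)]⟩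

/-- every non-crossing spanning path is a decoded staircase path. -/
lemma nc_exists_code (hn0 : 0 < n) (p : Equiv.Perm (Fin n))
    (hnc : ∀ e ∈ pathEdges p, ∀ f ∈ pathEdges p, ¬ Crosses e f) :
    ∃ g : ℕ → Bool, p = decp n hn0 (p (pt n hn0 0)).val g := by
  have main : ∀ i, i ≤ n - 1 → ∃ g : ℕ → Bool, ∀ j, j ≤ i → rpv n hn0 p j = rfun n g j := by
    intro i
    induction i with
    | zero =>
      intro _
      refine ⟨fun _ => true, ?_⟩
      intro j hj
      have : j = 0 := by omega
      subst this
      rw [rpv_zero]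
      unfold rfun
      rw [if_pos rfl]
    | succ i ih =>
      intro hi
      obtain ⟨g, hg⟩ := ih (by omega)
      have hHle := Hc_le g i
      -- every point after position i lies strictly inside the complementary arc
      have hmid : ∀ j, i + 1 ≤ j → j ≤ n - 1 →
          Hc g i < rpv n hn0 p j ∧ rpv n hn0 p j < n - (i - Hc g i) := by
        intro j hj1 hj2
        have harc : ¬ (rpv n hn0 p j ≤ Hc g i ∨ n - (i - Hc g i) ≤ rpv n hn0 p j) := by
          intro harc
          obtain ⟨j', hj', hrj'⟩ := rfun_full hn0 g i (by omega) _ (rpv_lt hn0 p j) harc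
          rw [← hg j' hj'] at hrj'
          have := rpv_inj hn0 p (by omega) (by omega) hrj'
          omega
        omega
      have hM := hmid (i+1) (le_refl _) hi
      -- the next point extends the arc at one of its two ends
      have hclaim : rpv n hn0 p (i+1) = Hc g i + 1 ∨
          rpv n hn0 p (i+1) = n - (i - Hc g i) - 1 := by
        by_contra hcon
        push_neg at hcon
        obtain ⟨hc1, hc2⟩ := hcon
        obtain ⟨j1, hj1n, hj1⟩ := rpv_surj hn0 p (t := Hc g i + 1) (by omega)
        obtain ⟨j2, hj2n, hj2⟩ := rpv_surj hn0 p (t := rpv n hn0 p (i+1) + 1) (by omega)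
        have hj1pos : i + 1 < j1 := by
          by_contra hcon2
          push_neg at hcon2
          rcases Nat.eq_or_lt_of_le hcon2 with h' | h'
          · rw [h'] at hj1; omega
          · have harc := rfun_old_in (n := n) g (show j1 ≤ i by omega) (show i ≤ n - 1 by omega)
            rw [← hg j1 (by omega)] at harc
            omega
        have hj2pos : i + 1 < j2 := by
          by_contra hcon2
          push_neg at hcon2
          rcases Nat.eq_or_lt_of_le hcon2 with h' | h'
          · rw [h'] at hj2; omega
          · have harc := rfun_old_in (n := n) g (show j2 ≤ i by omega) (show i ≤ n - 1 by omega)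
            rw [← hg j2 (by omega)] at harc
            omega
        have hkex : ∃ k, i + 1 < k ∧ k + 1 ≤ n - 1 ∧
            ((rpv n hn0 p k < rpv n hn0 p (i+1) ∧ rpv n hn0 p (i+1) < rpv n hn0 p (k+1)) ∨
             (rpv n hn0 p (k+1) < rpv n hn0 p (i+1) ∧ rpv n hn0 p (i+1) < rpv n hn0 p k)) := by
          rcases Nat.lt_or_ge j1 j2 with hor | hor
          · obtain ⟨k, hk1, hk2, hk3, hk4⟩ :=
              switch (fun j => rpv n hn0 p j < rpv n hn0 p (i+1)) j2 j1
                (by omega) (by omega) (by omega)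
            have hne : rpv n hn0 p (k+1) ≠ rpv n hn0 p (i+1) := fun hh => by
              have := rpv_inj hn0 p (by omega) (by omega) hh
              omega
            exact ⟨k, by omega, by omega, Or.inl ⟨hk3, by omega⟩⟩
          · have hj12 : j2 < j1 := by
              rcases Nat.eq_or_lt_of_le hor with h' | h'
              · rw [h'] at hj2; omega
              · exact h'
            obtain ⟨k, hk1, hk2, hk3, hk4⟩ :=
              switch (fun j => ¬ (rpv n hn0 p j < rpv n hn0 p (i+1))) j1 j2
                (by omega) (by omega) (by omega)
            have hne : rpv n hn0 p k ≠ rpv n hn0 p (i+1) := fun hh => by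
              have := rpv_inj hn0 p (by omega) (by omega) hh
              omega
            exact ⟨k, by omega, by omega, Or.inr ⟨by omega, by omega⟩⟩
        obtain ⟨k, hk1, hk2, hkor⟩ := hkex
        have hmk := hmid k (by omega) (by omega)
        have hmk1 := hmid (k+1) (by omega) hk2
        have hw : rpv n hn0 p i ≤ Hc g i ∨ n - (i - Hc g i) ≤ rpv n hn0 p i := by
          have harc := rfun_old_in (n := n) g (le_refl i) (show i ≤ n - 1 by omega)
          rw [← hg i (le_refl i)] at harc
          exact harc
        have hd : ∀ (x y : ℕ), x < n → y < n → x ≠ y →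
            p (pt n hn0 x) ≠ p (pt n hn0 y) := by
          intro x y hx hy hxy hh
          have h2 := p.injective hh
          have h3 := congrArg Fin.val h2
          rw [pt_val_small hn0 hx, pt_val_small hn0 hy] at h3
          exact hxy h3
        refine hnc _ (edge_mem hn0 p (i := k) (by omega)) _ (edge_mem hn0 p (i := i) (by omega)) ?_
        rw [crosses_iff (hd k (k+1) (by omega) (by omega) (by omega))
          (hd i (i+1) (by omega) (by omega) (by omega))
          (hd k i (by omega) (by omega) (by omega))
          (hd k (i+1) (by omega) (by omega) (by omega))
          (hd (k+1) i (by omega) (by omega) (by omega))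
          (hd (k+1) (i+1) (by omega) (by omega) (by omega))]
        rw [relv_comp (p (pt n hn0 0)) (p (pt n hn0 k)) (p (pt n hn0 i)),
            relv_comp (p (pt n hn0 0)) (p (pt n hn0 k)) (p (pt n hn0 (i+1))),
            relv_comp (p (pt n hn0 0)) (p (pt n hn0 k)) (p (pt n hn0 (k+1)))]
        simp only [rpv_def]
        have hlt1 := rpv_lt hn0 p i
        have hlt2 := rpv_lt hn0 p (i+1)
        have hlt3 := rpv_lt hn0 p k
        have hlt4 := rpv_lt hn0 p (k+1)
        by_cases c1 : rpv n hn0 p i < rpv n hn0 p k <;>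
          by_cases c2 : rpv n hn0 p (k + 1) < rpv n hn0 p k <;>
          by_cases c3 : rpv n hn0 p (i + 1) < rpv n hn0 p k <;>
          simp only [c1, c2, c3, if_true, if_false] <;> omega
      -- extend the code by one bit
      refine ⟨fun m => if m = i then decide (rpv n hn0 p (i+1) = Hc g i + 1) else g m, ?_⟩
      intro j hj
      set g' : ℕ → Bool :=
        fun m => if m = i then decide (rpv n hn0 p (i+1) = Hc g i + 1) else g m with hg'def
      have hagree : ∀ m, m < i → g m = g' m := by
        intro m hm
        rw [hg'def]
        simp only [if_neg (Nat.ne_of_lt hm)]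
      rcases Nat.lt_or_ge j (i+1) with hj' | hj'
      · rw [hg j (by omega)]
        exact rfun_agree (fun m hm => hagree m (by omega))
      · have hj'' : j = i + 1 := by omega
        subst hj''
        have hH : Hc g i = Hc g' i := Hc_agree hagree
        have hHs : Hc g' (i+1) = Hc g' i + (if g' i then 1 else 0) := Hc_succ g' i
        have hr : rfun n g' (i+1) =
            if g' i then Hc g' (i+1) else n - ((i+1) - Hc g' (i+1)) := by
          unfold rfun
          rw [if_neg (by omega), Nat.add_sub_cancel]
        have hgi : g' i = decide (rpv n hn0 p (i+1) = Hc g i + 1) := by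
          rw [hg'def]
          simp
        cases hb : g' i
        · have hdec : decide (rpv n hn0 p (i+1) = Hc g i + 1) = false := by
            rw [← hgi]; exact hb
          have hX := of_decide_eq_false hdec
          rw [hb] at hHs hr
          simp at hHs hr
          omega
        · have hdec : decide (rpv n hn0 p (i+1) = Hc g i + 1) = true := by
            rw [← hgi]; exact hb
          have hX := of_decide_eq_true hdec
          rw [hb] at hHs hr
          simp at hHs hr
          omega
  obtain ⟨g, hg⟩ := main (n-1) (le_refl _)
  refine ⟨g, Equiv.ext fun x => ?_⟩
  have hx := x.isLt
  have h1 : pt n hn0 x.val = x := pt_val_eq hn0 x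
  calc p x = pt n hn0 ((p (pt n hn0 0)).val + relv n (p (pt n hn0 0)) (p x)) :=
      (pt_add_relv hn0 _ _).symm
  _ = decp n hn0 (p (pt n hn0 0)).val g x := by
      rw [decp_apply]
      congr 1
      have h2 : relv n (p (pt n hn0 0)) (p x) = rpv n hn0 p x.val := by
        unfold rpv
        rw [h1]
      rw [h2, hg x.val (by omega)]

end Reconstruct


section Unique

variable {n : ℕ}

/-- a path edge set determines the permutation up to reversal. -/
lemma pathEdges_eq_cases (hn0 : 0 < n) (hn2 : 2 ≤ n) {p q : Equiv.Perm (Fin n)}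
    (h : pathEdges q = pathEdges p) : q = p ∨ q = Fin.revPerm.trans p := by
  set σ : ℕ → ℕ := fun j => (p.symm (q (pt n hn0 j))).val with hσ
  have hσlt : ∀ j, σ j < n := fun j => Fin.isLt _
  have hσinj : ∀ j k, j < n → k < n → σ j = σ k → j = k := by
    intro j k hj hk he
    have e1 : p.symm (q (pt n hn0 j)) = p.symm (q (pt n hn0 k)) := Fin.ext he
    have e2 := q.injective (p.symm.injective e1)
    have e3 := congrArg Fin.val e2
    rwa [pt_val_small hn0 hj, pt_val_small hn0 hk] at e3
  have hstep : ∀ j, j + 1 < n → σ (j+1) = σ j + 1 ∨ σ j = σ (j+1) + 1 := by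
    intro j hj
    have hm := edge_mem hn0 q (i := j) hj
    rw [h, mem_pathEdges] at hm
    obtain ⟨i, i', he, hii⟩ := hm
    rw [Sym2.eq_iff] at he
    rcases he with ⟨h1, h2⟩ | ⟨h1, h2⟩
    · left
      have e1 : p.symm (q (pt n hn0 j)) = i := by rw [h1]; exact p.symm_apply_apply i
      have e2 : p.symm (q (pt n hn0 (j+1))) = i' := by rw [h2]; exact p.symm_apply_apply i'
      have e3 : σ j = i.val := congrArg Fin.val e1
      have e4 : σ (j+1) = i'.val := congrArg Fin.val e2
      omega
    · right
      have e1 : p.symm (q (pt n hn0 j)) = i' := by rw [h1]; exact p.symm_apply_apply i'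
      have e2 : p.symm (q (pt n hn0 (j+1))) = i := by rw [h2]; exact p.symm_apply_apply i
      have e3 : σ j = i'.val := congrArg Fin.val e1
      have e4 : σ (j+1) = i.val := congrArg Fin.val e2
      omega
  rcases hstep 0 (by omega) with h1 | h1
  · left
    have CA : ∀ j, j < n → σ j = σ 0 + j := by
      intro j
      induction j using Nat.strong_induction_on with
      | _ j ihj =>
        intro hj
        rcases j with _ | j
        · omega
        rcases j with _ | m
        · omega
        · have e1 := ihj (m+1) (by omega) (by omega)
          have e0 := ihj m (by omega) (by omega)
          have hnorm : σ (m + 1 + 1) = σ (m + 2) := rfl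
          rcases hstep (m+1) (by omega) with h2 | h2
          · omega
          · exfalso
            have e2 : σ (m+2) = σ m := by omega
            have := hσinj _ _ (by omega) (by omega) e2
            omega
    have hσ0 : σ 0 = 0 := by
      have h2 := CA (n-1) (by omega)
      have h3 := hσlt (n-1)
      omega
    apply Equiv.ext
    intro x
    have hx := x.isLt
    have e1 : σ x.val = x.val := by have := CA x.val hx; omega
    have e2 : p.symm (q (pt n hn0 x.val)) = pt n hn0 x.val :=
      Fin.ext (by rw [pt_val_small hn0 hx]; exact e1)
    have e3 := congrArg p e2
    rw [Equiv.apply_symm_apply, pt_val_eq hn0 x] at e3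
    exact e3
  · right
    have CB : ∀ j, j < n → σ j + j = σ 0 := by
      intro j
      induction j using Nat.strong_induction_on with
      | _ j ihj =>
        intro hj
        rcases j with _ | j
        · omega
        rcases j with _ | m
        · omega
        · have e1 := ihj (m+1) (by omega) (by omega)
          have e0 := ihj m (by omega) (by omega)
          have hnorm : σ (m + 1 + 1) = σ (m + 2) := rfl
          rcases hstep (m+1) (by omega) with h2 | h2
          · exfalso
            have e2 : σ (m+2) = σ m := by omega
            have := hσinj _ _ (by omega) (by omega) e2
            omega
          · omega
    have hσ0 : σ 0 = n - 1 := by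
      have h2 := CB (n-1) (by omega)
      have h3 := hσlt (n-1)
      have h4 := hσlt 0
      omega
    apply Equiv.ext
    intro x
    have hx := x.isLt
    have e1 : σ x.val = n - (x.val + 1) := by have := CB x.val hx; omega
    have e2 : p.symm (q (pt n hn0 x.val)) = Fin.rev x :=
      Fin.ext (by rw [Fin.val_rev]; exact e1)
    have e3 := congrArg p e2
    rw [Equiv.apply_symm_apply, pt_val_eq hn0 x] at e3
    rw [Equiv.trans_apply, Fin.revPerm_apply]
    exact e3

/-- reversing a permutation does not change the path edge set. -/
lemma pathEdges_rev (hn0 : 0 < n) (p : Equiv.Perm (Fin n)) :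
    pathEdges (Fin.revPerm.trans p) = pathEdges p := by
  apply Finset.ext
  intro e
  rw [mem_pathEdges, mem_pathEdges]
  constructor
  · rintro ⟨i, j, rfl, hij⟩
    refine ⟨Fin.rev j, Fin.rev i, ?_, ?_⟩
    · rw [Equiv.trans_apply, Equiv.trans_apply, Fin.revPerm_apply, Fin.revPerm_apply]
      exact Sym2.eq_swap
    · have hi := i.isLt
      have hj := j.isLt
      rw [Fin.val_rev, Fin.val_rev]
      omega
  · rintro ⟨i, j, rfl, hij⟩
    refine ⟨Fin.rev j, Fin.rev i, ?_, ?_⟩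
    · rw [Equiv.trans_apply, Equiv.trans_apply, Fin.revPerm_apply, Fin.revPerm_apply,
        Fin.rev_rev, Fin.rev_rev]
      exact Sym2.eq_swap
    · have hi := i.isLt
      have hj := j.isLt
      rw [Fin.val_rev, Fin.val_rev]
      omega

lemma rev_trans_ne (hn0 : 0 < n) (hn2 : 2 ≤ n) (p : Equiv.Perm (Fin n)) :
    Fin.revPerm.trans p ≠ p := by
  intro hh
  have h1 := congrFun (congrArg (fun (e : Equiv.Perm (Fin n)) => (e : Fin n → Fin n)) hh)
    (pt n hn0 0)
  simp only [Equiv.trans_apply, Fin.revPerm_apply] at h1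
  have h2 := p.injective h1
  have h3 := congrArg Fin.val h2
  rw [Fin.val_rev, pt_val_small hn0 (by omega)] at h3
  omega

end Unique

section CodeInj

variable {n : ℕ}

/-- extend a finitely supported code to `ℕ → Bool`. -/
def extc (n : ℕ) (f : Fin (n-2) → Bool) : ℕ → Bool :=
  fun m => if h : m < n - 2 then f ⟨m, h⟩ else true

lemma pt_add_inj (hn0 : 0 < n) (s : ℕ) {a b : ℕ} (ha : a < n) (hb : b < n)
    (h : pt n hn0 (s+a) = pt n hn0 (s+b)) : a = b := by
  have hval : (s + a) % n = (s + b) % n := congrArg Fin.val h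
  have hml : a % n = b % n := Nat.ModEq.add_left_cancel' s hval
  rwa [Nat.mod_eq_of_lt ha, Nat.mod_eq_of_lt hb] at hml

lemma code_inj (hn3 : 3 ≤ n) (hn0 : 0 < n) (s s' : Fin n) (f f' : Fin (n-2) → Bool)
    (h : decp n hn0 s.val (extc n f) = decp n hn0 s'.val (extc n f')) :
    s = s' ∧ f = f' := by
  have happ : ∀ x : Fin n, pt n hn0 (s.val + rfun n (extc n f) x.val) =
      pt n hn0 (s'.val + rfun n (extc n f') x.val) := fun x => by
    have := congrFun (congrArg (fun (e : Equiv.Perm (Fin n)) => (e : Fin n → Fin n)) h) x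
    exact this
  have hs : s = s' := by
    have h0 := happ (pt n hn0 0)
    have hv : (pt n hn0 0).val = 0 := pt_val_small hn0 (by omega)
    rw [hv] at h0
    have hr0 : rfun n (extc n f) 0 = 0 := by unfold rfun; rw [if_pos rfl]
    have hr0' : rfun n (extc n f') 0 = 0 := by unfold rfun; rw [if_pos rfl]
    rw [hr0, hr0'] at h0
    rw [Nat.add_zero, Nat.add_zero, pt_val_eq, pt_val_eq] at h0
    exact h0
  subst hs
  refine ⟨rfl, ?_⟩
  have hrf : ∀ j : ℕ, j ≤ n - 1 → rfun n (extc n f) j = rfun n (extc n f') j := by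
    intro j hj
    have hx := happ (pt n hn0 j)
    rw [pt_val_small hn0 (by omega)] at hx
    exact pt_add_inj hn0 s.val (rfun_lt hn0 _ hj) (rfun_lt hn0 _ hj) hx
  have claim : ∀ j, j ≤ n - 2 →
      Hc (extc n f) j = Hc (extc n f') j ∧ ∀ m, m < j → extc n f m = extc n f' m := by
    intro j
    induction j with
    | zero => exact fun _ => ⟨rfl, fun m hm => absurd hm (by omega)⟩
    | succ j ih =>
      intro hj
      obtain ⟨hH, hbits⟩ := ih (by omega)
      have hreq := hrf (j+1) (by omega)
      have hs1 := Hc_succ (extc n f) j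
      have hs2 := Hc_succ (extc n f') j
      have hle1 := Hc_le (extc n f) j
      have hr1 : rfun n (extc n f) (j+1) = if extc n f j then Hc (extc n f) (j+1)
          else n - ((j+1) - Hc (extc n f) (j+1)) := by
        unfold rfun
        rw [if_neg (by omega), Nat.add_sub_cancel]
      have hr2 : rfun n (extc n f') (j+1) = if extc n f' j then Hc (extc n f') (j+1)
          else n - ((j+1) - Hc (extc n f') (j+1)) := by
        unfold rfun
        rw [if_neg (by omega), Nat.add_sub_cancel]
      have hbit : extc n f j = extc n f' j := by
        cases hb1 : extc n f j <;> cases hb2 : extc n f' j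
        · rfl
        · exfalso
          rw [hb1] at hr1 hs1
          rw [hb2] at hr2 hs2
          simp at hr1 hr2 hs1 hs2
          omega
        · exfalso
          rw [hb1] at hr1 hs1
          rw [hb2] at hr2 hs2
          simp at hr1 hr2 hs1 hs2
          omega
        · rfl
      refine ⟨by rw [hs1, hs2, hH, hbit], ?_⟩
      intro m hm
      rcases Nat.lt_or_ge m j with h' | h'
      · exact hbits m h'
      · have : m = j := by omega
        subst this
        exact hbit
  apply funext
  intro m
  have hm := m.isLt
  have := (claim (n-2) (le_refl _)).2 m.val hm
  unfold extc at this
  rw [dif_pos hm, dif_pos hm] at this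
  simpa using this

end CodeInj


section Count

variable {n : ℕ}

/-- the finset of non-crossing spanning path permutations. -/
def ncPerms (n : ℕ) : Finset (Equiv.Perm (Fin n)) :=
  Finset.univ.filter (fun p => IsNCPath (pathEdges p))

/-- map a permutation to its path, as a vertex of the path graph. -/
noncomputable def toVert (n : ℕ) (hn0 : 0 < n) (p : Equiv.Perm (Fin n)) : PVert n :=
  if h : IsNCPath (pathEdges p) then ⟨pathEdges p, h⟩
  else ⟨pathEdges (decp n hn0 0 (fun _ => true)), decode_nc hn0 0 (fun _ => true)⟩

lemma toVert_eq (hn0 : 0 < n) (p : Equiv.Perm (Fin n)) (h : IsNCPath (pathEdges p)) :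
    toVert n hn0 p = ⟨pathEdges p, h⟩ := dif_pos h

lemma ncPerms_card (hn : 3 ≤ n) : (ncPerms n).card = n * 2 ^ (n - 2) := by
  have hn0 : 0 < n := by omega
  have hb : (Finset.univ : Finset (Fin n × (Fin (n-2) → Bool))).card = (ncPerms n).card := by
    apply Finset.card_bij (i := fun c _ => decp n hn0 c.1.val (extc n c.2))
    · intro c _
      exact Finset.mem_filter.mpr ⟨Finset.mem_univ _, decode_nc hn0 _ _⟩
    · intro c1 h1 c2 h2 heq
      obtain ⟨hs, hf⟩ := code_inj hn hn0 _ _ _ _ heq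
      exact Prod.ext hs hf
    · intro p hp
      obtain ⟨_, hex, hnc⟩ := Finset.mem_filter.mp hp
      obtain ⟨g, hpg⟩ := nc_exists_code hn0 p hnc
      refine ⟨⟨p (pt n hn0 0), fun m => g m.val⟩, Finset.mem_univ _, ?_⟩
      apply Equiv.ext
      intro x
      conv_rhs => rw [hpg]
      rw [decp_apply, decp_apply]
      have hagree : ∀ k, k < n - 2 → extc n (fun m : Fin (n-2) => g m.val) k = g k := by
        intro k hk
        unfold extc
        rw [dif_pos hk]
      have hrf : rfun n (extc n (fun m : Fin (n-2) => g m.val)) x.val = rfun n g x.val :=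
        rfun_congr (n := n) hn hagree (j := x.val) (by have := x.isLt; omega)
      rw [hrf]
  rw [← hb, Finset.card_univ]
  simp [Fintype.card_fun]

lemma fiber_card (hn : 3 ≤ n) (v : PVert n) :
    ((ncPerms n).filter (fun p => toVert n (by omega) p = v)).card = 2 := by
  have hn0 : 0 < n := by omega
  obtain ⟨⟨p0, hp0⟩, hncv⟩ := v.2
  have hncp0 : IsNCPath (pathEdges p0) := by rw [← hp0]; exact v.2
  have hset : (ncPerms n).filter (fun p => toVert n (by omega : (0:ℕ) < n) p = v) =
      {p0, Fin.revPerm.trans p0} := by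
    apply Finset.ext
    intro q
    rw [Finset.mem_filter, Finset.mem_insert, Finset.mem_singleton]
    constructor
    · rintro ⟨hqA, hqF⟩
      have hqnc : IsNCPath (pathEdges q) := (Finset.mem_filter.mp hqA).2
      rw [toVert_eq _ q hqnc] at hqF
      have hEq : pathEdges q = v.1 := congrArg Subtype.val hqF
      rw [hp0] at hEq
      exact pathEdges_eq_cases hn0 (by omega) hEq
    · intro hq
      have hEq : pathEdges q = pathEdges p0 := by
        rcases hq with rfl | rfl
        · rfl
        · exact pathEdges_rev hn0 p0
      have hqnc : IsNCPath (pathEdges q) := by rw [hEq]; exact hncp0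
      refine ⟨Finset.mem_filter.mpr ⟨Finset.mem_univ _, hqnc⟩, ?_⟩
      rw [toVert_eq _ q hqnc]
      apply Subtype.ext
      show pathEdges q = v.1
      rw [hEq]
      exact hp0.symm
  rw [hset]
  rw [Finset.card_insert_of_notMem, Finset.card_singleton]
  rw [Finset.mem_singleton]
  exact fun hh => rev_trans_ne hn0 (by omega) p0 hh.symm

end Count

/-- The number of non-crossing spanning paths of `n ≥ 3` points in convex position
is exactly `n · 2^{n-3}`. -/
theorem card_plane_spanning_paths (n : ℕ) (hn : 3 ≤ n) :
    Fintype.card (PVert n) = n * 2 ^ (n - 3) := by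
  have hn0 : 0 < n := by omega
  have hA2 : (ncPerms n).card = ∑ v : PVert n,
      ((ncPerms n).filter (fun p => toVert n hn0 p = v)).card :=
    Finset.card_eq_sum_card_fiberwise (fun p _ => Finset.mem_univ (toVert n hn0 p))
  have hsum : (ncPerms n).card = 2 * Fintype.card (PVert n) := by
    rw [hA2, Finset.sum_congr rfl (fun v _ => fiber_card hn v), Finset.sum_const,
      smul_eq_mul, Finset.card_univ]
    ring
  rw [ncPerms_card hn] at hsum
  have hpow : 2 ^ (n - 2) = 2 * 2 ^ (n - 3) := by
    have e : n - 2 = (n - 3) + 1 := by omega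
    rw [e, pow_succ]
    ring
  have h2 : 2 * (n * 2 ^ (n-3)) = 2 * Fintype.card (PVert n) := by
    rw [← hsum, hpow]
    ring
  exact (Nat.eq_of_mul_eq_mul_left (by norm_num) h2).symm

end PG
end
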